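/- arXiv:1006.2706 — 6 statements merged into one kernel-verified Lean document; each statement's English description precedes it below -/
import Mathlib

section
/- The shuffle product on symmetric polynomials defined by (f1·f2)(x_1,...,x_{n+m}) = sum over shuffles {i_1<...<i_n}, {j_1<...<j_m} partitioning {1,...,n+m} of f1(x_{i_1},...,x_{i_n})·f2(x_{j_1},...,x_{j_m})·(∏_{k,l}(x_{j_l}-x_{i_k}))^{d-1} is associative, for any fixed integer d ≥ 0. -/
/- STATEMENT 0: The shuffle product on symmetric polynomials
   (f1·f2)(x_1,...,x_{n+m}) = ∑_{shuffles} f1(x_I) f2(x_J) ∏_{k,l}(x_{j_l}-x_{i_k})^{d-1}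
   is associative for any fixed integer d ≥ 0.  (For d = 0 the exponent is -1, so we work
   with functions to ℚ and state the identity at points with pairwise distinct coordinates,
   i.e. as an identity of rational functions.) -/

namespace Stmt0

noncomputable section

lemma compl_card {n m : ℕ} (S : Finset (Fin (n + m))) (hS : S.card = n) :
    Sᶜ.card = m := by
  rw [Finset.card_compl, hS, Fintype.card_fin]
  omega

/-- The shuffle product with parameter `d`: the sum over all `(n,m)`-shuffles of
`f1(x_{i_1},…,x_{i_n}) f2(x_{j_1},…,x_{j_m}) ∏_{k,l} (x_{j_l} - x_{i_k})^{d-1}`. -/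
def shuffleMul (d : ℕ) {n m : ℕ} (f1 : (Fin n → ℚ) → ℚ) (f2 : (Fin m → ℚ) → ℚ) :
    (Fin (n + m) → ℚ) → ℚ := fun x =>
  ∑ S ∈ (Finset.powersetCard n (Finset.univ : Finset (Fin (n + m)))).attach,
    f1 (fun a => x (S.1.orderEmbOfFin ((Finset.mem_powersetCard.mp S.2).2) a)) *
      f2 (fun b => x ((S.1)ᶜ.orderEmbOfFin
        (compl_card S.1 ((Finset.mem_powersetCard.mp S.2).2)) b)) *
      ∏ a : Fin n, ∏ b : Fin m,
        (x ((S.1)ᶜ.orderEmbOfFin (compl_card S.1 ((Finset.mem_powersetCard.mp S.2).2)) b) -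
            x (S.1.orderEmbOfFin ((Finset.mem_powersetCard.mp S.2).2) a)) ^ ((d : ℤ) - 1)

-- helpers from h1 (assume they compile; paste)
lemma card_image_mono {N N' p : ℕ} {φ : Fin N' → Fin N} (hφ : StrictMono φ)
    {s : Finset (Fin N')} (hs : s.card = p) : (s.image φ).card = p := by
  rw [Finset.card_image_of_injective _ hφ.injective, hs]

lemma emb_image {N N' p : ℕ} {φ : Fin N' → Fin N} (hφ : StrictMono φ)
    (s : Finset (Fin N')) (hs : s.card = p) (a : Fin p) :
    φ (s.orderEmbOfFin hs a) = (s.image φ).orderEmbOfFin (card_image_mono hφ hs) a := by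
  have := Finset.orderEmbOfFin_unique (card_image_mono hφ hs)
    (f := fun a => φ (s.orderEmbOfFin hs a))
    (fun i => Finset.mem_image_of_mem _ (Finset.orderEmbOfFin_mem s hs i))
    (hφ.comp (s.orderEmbOfFin hs).strictMono)
  exact congrFun this a

def ev {N : ℕ} (x : Fin N → ℚ) (p : ℕ) (s : Finset (Fin N)) : Fin p → ℚ := fun i =>
  if h : s.card = p then x (s.orderEmbOfFin h i) else 0

lemma ev_eq {N : ℕ} (x : Fin N → ℚ) {p : ℕ} {s : Finset (Fin N)} (h : s.card = p) :
    ev x p s = fun i => x (s.orderEmbOfFin h i) := by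
  funext i; simp [ev, h]

lemma ev_comp_mono {N N' : ℕ} {φ : Fin N' → Fin N} (hφ : StrictMono φ)
    (x : Fin N → ℚ) (p : ℕ) (s : Finset (Fin N')) :
    ev (fun i => x (φ i)) p s = ev x p (s.image φ) := by
  by_cases h : s.card = p
  · rw [ev_eq _ h, ev_eq x (card_image_mono hφ h)]
    funext a
    rw [emb_image hφ s h a]
  · have h' : ¬ (s.image φ).card = p := by
      rwa [Finset.card_image_of_injective _ hφ.injective]
    funext a; simp [ev, h, h']

lemma prod_emb {N p : ℕ} (s : Finset (Fin N)) (h : s.card = p) (g : Fin N → ℚ) :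
    ∏ i : Fin p, g (s.orderEmbOfFin h i) = ∏ a ∈ s, g a := by
  refine Finset.prod_nbij (fun i => s.orderEmbOfFin h i)
    (fun i _ => Finset.orderEmbOfFin_mem s h i)
    (fun a _ b _ hab => (s.orderEmbOfFin h).injective hab) ?_ (fun a _ => rfl)
  intro a ha
  have : a ∈ Set.range (s.orderEmbOfFin h) := by
    rw [Finset.range_orderEmbOfFin]; exact ha
  obtain ⟨i, hi⟩ := this
  exact ⟨i, by simp, hi⟩

lemma image_emb_univ {N p : ℕ} (s : Finset (Fin N)) (h : s.card = p) :
    (Finset.univ : Finset (Fin p)).image (s.orderEmbOfFin h) = s := by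
  apply Finset.eq_of_subset_of_card_le
  · intro a ha
    obtain ⟨i, _, hi⟩ := Finset.mem_image.mp ha
    exact hi ▸ Finset.orderEmbOfFin_mem s h i
  · rw [Finset.card_image_of_injective _ (s.orderEmbOfFin h).injective, h,
      Finset.card_univ, Fintype.card_fin]

lemma image_emb_compl {N M : ℕ} (S : Finset (Fin N)) (hS : S.card = M) (T : Finset (Fin M)) :
    Tᶜ.image (S.orderEmbOfFin hS) = S \ T.image (S.orderEmbOfFin hS) := by
  ext y
  simp only [Finset.mem_image, Finset.mem_sdiff, Finset.mem_compl]
  constructor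
  · rintro ⟨i, hi, rfl⟩
    refine ⟨Finset.orderEmbOfFin_mem S hS i, ?_⟩
    rintro ⟨j, hj, hij⟩
    exact hi (((S.orderEmbOfFin hS).injective hij) ▸ hj)
  · rintro ⟨hy, hny⟩
    have : y ∈ Set.range (S.orderEmbOfFin hS) := by
      rw [Finset.range_orderEmbOfFin]; exact hy
    obtain ⟨i, rfl⟩ := this
    exact ⟨i, fun hi => hny ⟨i, hi, rfl⟩, rfl⟩

lemma image_compl_equiv {N N' : ℕ} (e : Fin N' ≃ Fin N) (s : Finset (Fin N')) :
    sᶜ.image e = (s.image e)ᶜ := by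
  ext y
  simp only [Finset.mem_image, Finset.mem_compl]
  constructor
  · rintro ⟨i, hi, rfl⟩ ⟨j, hj, hij⟩
    exact hi ((e.injective hij) ▸ hj)
  · intro hy
    exact ⟨e.symm y, fun h => hy ⟨e.symm y, h, by simp⟩, by simp⟩

lemma emb_congr {N p : ℕ} {s t : Finset (Fin N)} (hst : s = t) (hs : s.card = p) (i : Fin p) :
    s.orderEmbOfFin hs i = t.orderEmbOfFin (hst ▸ hs) i := by subst hst; rfl

lemma image_union_compl {N M : ℕ} (S : Finset (Fin N)) (hS : S.card = M) (T : Finset (Fin M)) :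
    T.image (S.orderEmbOfFin hS) ∪ Tᶜ.image (S.orderEmbOfFin hS) = S := by
  rw [← Finset.image_union, Finset.union_compl, image_emb_univ]

lemma filter_image {N M : ℕ} (S : Finset (Fin N)) (hS : S.card = M) {A : Finset (Fin N)}
    (hA : A ⊆ S) :
    (Finset.univ.filter fun i => S.orderEmbOfFin hS i ∈ A).image (S.orderEmbOfFin hS) = A := by
  ext y
  simp only [Finset.mem_image, Finset.mem_filter, Finset.mem_univ, true_and]
  constructor
  · rintro ⟨i, hi, rfl⟩; exact hi
  · intro hy
    have : y ∈ Set.range (S.orderEmbOfFin hS) := by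
      rw [Finset.range_orderEmbOfFin]; exact hA hy
    obtain ⟨i, rfl⟩ := this
    exact ⟨i, hy, rfl⟩

lemma filter_preimage_image {N M : ℕ} (S : Finset (Fin N)) (hS : S.card = M)
    (T : Finset (Fin M)) :
    (Finset.univ.filter fun i =>
      S.orderEmbOfFin hS i ∈ T.image (S.orderEmbOfFin hS)) = T := by
  ext i
  simp [Finset.mem_image, (S.orderEmbOfFin hS).injective.eq_iff]

def sTerm (d : ℕ) {n m : ℕ} (f1 : (Fin n → ℚ) → ℚ) (f2 : (Fin m → ℚ) → ℚ)
    (x : Fin (n + m) → ℚ) (S : Finset (Fin (n + m))) : ℚ :=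
  f1 (ev x n S) * f2 (ev x m Sᶜ) *
    ∏ a : Fin n, ∏ b : Fin m, (ev x m Sᶜ b - ev x n S a) ^ ((d : ℤ) - 1)

lemma shuffleMul_eq (d : ℕ) {n m : ℕ} (f1 : (Fin n → ℚ) → ℚ) (f2 : (Fin m → ℚ) → ℚ)
    (x : Fin (n + m) → ℚ) :
    shuffleMul d f1 f2 x
      = ∑ S ∈ Finset.powersetCard n (Finset.univ : Finset (Fin (n + m))),
          sTerm d f1 f2 x S := by
  rw [shuffleMul, ← Finset.sum_attach (Finset.powersetCard n Finset.univ) (sTerm d f1 f2 x)]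
  refine Finset.sum_congr rfl fun S _ => ?_
  have hS := (Finset.mem_powersetCard.mp S.2).2
  simp only [sTerm, ev_eq x hS, ev_eq x (compl_card S.1 hS)]


lemma emb_congr' {N p : ℕ} {s t : Finset (Fin N)} (hst : s = t) (hs : s.card = p)
    (ht : t.card = p) (i : Fin p) :
    s.orderEmbOfFin hs i = t.orderEmbOfFin ht i := by subst hst; rfl

def Dset (n m k : ℕ) : Finset (Finset (Fin (n + m + k)) × Finset (Fin (n + m + k))) :=
  Finset.univ.filter fun p => p.1.card = n ∧ p.2.card = m ∧ Disjoint p.1 p.2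

def bigTerm (d : ℕ) {n m k : ℕ} (f1 : (Fin n → ℚ) → ℚ) (f2 : (Fin m → ℚ) → ℚ)
    (f3 : (Fin k → ℚ) → ℚ) (x : Fin (n + m + k) → ℚ)
    (p : Finset (Fin (n + m + k)) × Finset (Fin (n + m + k))) : ℚ :=
  f1 (ev x n p.1) * f2 (ev x m p.2) * f3 (ev x k (p.1 ∪ p.2)ᶜ) *
    (∏ a : Fin n, ∏ b : Fin m, (ev x m p.2 b - ev x n p.1 a) ^ ((d : ℤ) - 1)) *
    (∏ a : Fin n, ∏ c : Fin k, (ev x k (p.1 ∪ p.2)ᶜ c - ev x n p.1 a) ^ ((d : ℤ) - 1)) *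
    (∏ b : Fin m, ∏ c : Fin k, (ev x k (p.1 ∪ p.2)ᶜ c - ev x m p.2 b) ^ ((d : ℤ) - 1))

set_option maxHeartbeats 1000000 in
lemma lhs_eq (d : ℕ) {n m k : ℕ} (f1 : (Fin n → ℚ) → ℚ) (f2 : (Fin m → ℚ) → ℚ)
    (f3 : (Fin k → ℚ) → ℚ) (x : Fin (n + m + k) → ℚ) :
    shuffleMul d (shuffleMul d f1 f2) f3 x
      = ∑ p ∈ Dset n m k, bigTerm d f1 f2 f3 x p := by
  rw [shuffleMul_eq]
  have step : ∀ S ∈ Finset.powersetCard (n + m) (Finset.univ : Finset (Fin (n + m + k))),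
      sTerm d (shuffleMul d f1 f2) f3 x S
        = ∑ T ∈ Finset.powersetCard n (Finset.univ : Finset (Fin (n + m))),
            sTerm d f1 f2 (ev x (n + m) S) T * f3 (ev x k Sᶜ) *
              ∏ a : Fin (n + m), ∏ c : Fin k,
                (ev x k Sᶜ c - ev x (n + m) S a) ^ ((d : ℤ) - 1) := by
    intro S _
    simp only [sTerm]
    rw [shuffleMul_eq, Finset.sum_mul, Finset.sum_mul]
    simp only [sTerm]
  rw [Finset.sum_congr rfl step, ← Finset.sum_product']
  have hc1 : ∀ {p : Finset (Fin (n + m + k)) × Finset (Fin (n + m))},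
      p ∈ Finset.powersetCard (n + m) (Finset.univ : Finset (Fin (n + m + k))) ×ˢ
        Finset.powersetCard n (Finset.univ : Finset (Fin (n + m))) → p.1.card = n + m :=
    fun hp => (Finset.mem_powersetCard.mp (Finset.mem_product.mp hp).1).2
  have hc2 : ∀ {p : Finset (Fin (n + m + k)) × Finset (Fin (n + m))},
      p ∈ Finset.powersetCard (n + m) (Finset.univ : Finset (Fin (n + m + k))) ×ˢ
        Finset.powersetCard n (Finset.univ : Finset (Fin (n + m))) → p.2.card = n :=
    fun hp => (Finset.mem_powersetCard.mp (Finset.mem_product.mp hp).2).2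
  have hcU : ∀ {q : Finset (Fin (n + m + k)) × Finset (Fin (n + m + k))},
      q ∈ Dset n m k → (q.1 ∪ q.2).card = n + m := by
    intro q hq
    obtain ⟨-, h1, h2, h3⟩ := Finset.mem_filter.mp hq
    rw [Finset.card_union_of_disjoint h3, h1, h2]
  refine Finset.sum_bij'
    (fun p hp => (p.2.image (p.1.orderEmbOfFin (hc1 hp)),
                  (p.2)ᶜ.image (p.1.orderEmbOfFin (hc1 hp))))
    (fun q hq => (q.1 ∪ q.2,
      Finset.univ.filter fun i => (q.1 ∪ q.2).orderEmbOfFin (hcU hq) i ∈ q.1))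
    ?_ ?_ ?_ ?_ ?_
  · -- hi : lands in Dset
    intro p hp
    refine Finset.mem_filter.mpr ⟨Finset.mem_univ _, ?_, ?_, ?_⟩
    · exact card_image_mono (p.1.orderEmbOfFin (hc1 hp)).strictMono (hc2 hp)
    · exact card_image_mono (p.1.orderEmbOfFin (hc1 hp)).strictMono (compl_card _ (hc2 hp))
    · exact (Finset.disjoint_image (p.1.orderEmbOfFin (hc1 hp)).injective).mpr
        disjoint_compl_right
  · -- hj : lands in product
    intro q hq
    obtain ⟨-, h1, h2, h3⟩ := Finset.mem_filter.mp hq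
    refine Finset.mem_product.mpr ⟨?_, ?_⟩
    · exact Finset.mem_powersetCard.mpr ⟨Finset.subset_univ _, hcU hq⟩
    · refine Finset.mem_powersetCard.mpr ⟨Finset.subset_univ _, ?_⟩
      have himg := filter_image (q.1 ∪ q.2) (hcU hq)
        (Finset.subset_union_left (s₁ := q.1) (s₂ := q.2))
      have := congrArg Finset.card himg
      rwa [Finset.card_image_of_injective _
        ((q.1 ∪ q.2).orderEmbOfFin (hcU hq)).injective, h1] at this
  · -- left_inv
    intro p hp
    have hU : p.2.image (p.1.orderEmbOfFin (hc1 hp)) ∪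
        (p.2)ᶜ.image (p.1.orderEmbOfFin (hc1 hp)) = p.1 :=
      image_union_compl p.1 (hc1 hp) p.2
    refine Prod.ext hU ?_
    have key : ∀ (W : Finset (Fin (n + m + k))), W = p.1 → ∀ (h : W.card = n + m),
        (Finset.univ.filter fun i =>
          W.orderEmbOfFin h i ∈ p.2.image (p.1.orderEmbOfFin (hc1 hp))) = p.2 := by
      rintro W rfl h
      exact filter_preimage_image p.1 h p.2
    exact key _ hU _
  · -- right_inv
    intro q hq
    obtain ⟨-, h1, h2, h3⟩ := Finset.mem_filter.mp hq
    have himg := filter_image (q.1 ∪ q.2) (hcU hq)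
      (Finset.subset_union_left (s₁ := q.1) (s₂ := q.2))
    refine Prod.ext himg ?_
    exact (image_emb_compl (q.1 ∪ q.2) (hcU hq) _).trans
      (by rw [himg, Finset.union_sdiff_cancel_left h3])
  · -- term equality
    intro p hp
    simp only [sTerm, bigTerm]
    set eS := p.1.orderEmbOfFin (hc1 hp) with heS
    set A := Finset.image (⇑eS) p.2 with hA'
    set B := Finset.image (⇑eS) (p.2)ᶜ with hB'
    have hT : p.2.card = n := hc2 hp
    have hA : A.card = n := card_image_mono eS.strictMono hT
    have hB : B.card = m := card_image_mono eS.strictMono (compl_card _ hT)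
    have hAuB : A ∪ B = p.1 := image_union_compl p.1 (hc1 hp) p.2
    have hevS : ev x (n + m) p.1 = fun i => x (eS i) := ev_eq x (hc1 hp)
    have h1 : ev (ev x (n + m) p.1) n p.2 = ev x n A := by
      rw [hevS, ev_comp_mono eS.strictMono]
    have h2 : ev (ev x (n + m) p.1) m (p.2)ᶜ = ev x m B := by
      rw [hevS, ev_comp_mono eS.strictMono]
    have hC : (p.1)ᶜ = (A ∪ B)ᶜ := by rw [hAuB]
    have hout : (∏ a : Fin (n + m), ∏ c : Fin k,
          (ev x k (A ∪ B)ᶜ c - ev x (n + m) p.1 a) ^ ((d : ℤ) - 1))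
        = (∏ a : Fin n, ∏ c : Fin k,
            (ev x k (A ∪ B)ᶜ c - ev x n A a) ^ ((d : ℤ) - 1)) *
          (∏ b : Fin m, ∏ c : Fin k,
            (ev x k (A ∪ B)ᶜ c - ev x m B b) ^ ((d : ℤ) - 1)) := by
      calc (∏ a : Fin (n + m), ∏ c : Fin k,
              (ev x k (A ∪ B)ᶜ c - ev x (n + m) p.1 a) ^ ((d : ℤ) - 1))
          = ∏ a : Fin (n + m), ∏ c : Fin k,
              (ev x k (A ∪ B)ᶜ c - x (eS a)) ^ ((d : ℤ) - 1) := by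
            rw [hevS]
        _ = ∏ s ∈ p.1, ∏ c : Fin k, (ev x k (A ∪ B)ᶜ c - x s) ^ ((d : ℤ) - 1) :=
            prod_emb p.1 (hc1 hp)
              (fun s => ∏ c : Fin k, (ev x k (A ∪ B)ᶜ c - x s) ^ ((d : ℤ) - 1))
        _ = (∏ s ∈ A, ∏ c : Fin k, (ev x k (A ∪ B)ᶜ c - x s) ^ ((d : ℤ) - 1)) *
            (∏ s ∈ B, ∏ c : Fin k, (ev x k (A ∪ B)ᶜ c - x s) ^ ((d : ℤ) - 1)) := by
            rw [← hAuB, Finset.prod_union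
              ((Finset.disjoint_image eS.injective).mpr disjoint_compl_right)]
        _ = _ := by
            rw [← prod_emb A hA
                (fun s => ∏ c : Fin k, (ev x k (A ∪ B)ᶜ c - x s) ^ ((d : ℤ) - 1)),
              ← prod_emb B hB
                (fun s => ∏ c : Fin k, (ev x k (A ∪ B)ᶜ c - x s) ^ ((d : ℤ) - 1)),
              ev_eq x hA, ev_eq x hB]
    rw [h1, h2, hC, hout]
    ring

lemma union_compl_eq {α : Type*} [Fintype α] [DecidableEq α] {A B : Finset α}
    (h : Disjoint A B) : B ∪ (A ∪ B)ᶜ = Aᶜ := by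
  have hd := Finset.disjoint_left.mp h
  ext t
  simp only [Finset.mem_union, Finset.mem_compl, Finset.mem_union]
  constructor
  · rintro (hB | hn)
    · exact fun hA => hd hA hB
    · exact fun hA => hn (Or.inl hA)
  · intro hA
    by_cases hB : t ∈ B
    · exact Or.inl hB
    · exact Or.inr fun h' => h'.elim hA hB

set_option maxHeartbeats 1000000 in
lemma rhs_eq (d : ℕ) {n m k : ℕ} (f1 : (Fin n → ℚ) → ℚ) (f2 : (Fin m → ℚ) → ℚ)
    (f3 : (Fin k → ℚ) → ℚ) (x : Fin (n + m + k) → ℚ) :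
    shuffleMul d f1 (shuffleMul d f2 f3)
        (fun i => x ((finCongr (Nat.add_assoc n m k)).symm i))
      = ∑ p ∈ Dset n m k, bigTerm d f1 f2 f3 x p := by
  set cst := ⇑((finCongr (Nat.add_assoc n m k)).symm) with hcst'
  set icst := ⇑(finCongr (Nat.add_assoc n m k)) with hicst'
  have hcst : StrictMono cst := fun a b hab => by
    rw [hcst']
    simpa only [Fin.lt_def, finCongr_symm, finCongr_apply, Fin.coe_cast] using hab
  have hicst : StrictMono icst := fun a b hab => by
    rw [hicst']
    simpa only [Fin.lt_def, finCongr_apply, Fin.coe_cast] using hab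
  have hci : ∀ s : Finset (Fin (n + (m + k))), Finset.image icst (Finset.image cst s) = s := by
    intro s
    rw [Finset.image_image]
    have : (icst ∘ cst) = id := funext fun i => Equiv.apply_symm_apply _ i
    rw [this, Finset.image_id]
  have hic : ∀ s : Finset (Fin (n + m + k)), Finset.image cst (Finset.image icst s) = s := by
    intro s
    rw [Finset.image_image]
    have : (cst ∘ icst) = id := funext fun i => Equiv.symm_apply_apply _ i
    rw [this, Finset.image_id]
  rw [shuffleMul_eq]
  have step : ∀ A' ∈ Finset.powersetCard n (Finset.univ : Finset (Fin (n + (m + k)))),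
      sTerm d f1 (shuffleMul d f2 f3) (fun i => x (cst i)) A'
        = ∑ U ∈ Finset.powersetCard m (Finset.univ : Finset (Fin (m + k))),
            f1 (ev (fun i => x (cst i)) n A') *
              sTerm d f2 f3 (ev (fun i => x (cst i)) (m + k) (A')ᶜ) U *
              ∏ a : Fin n, ∏ b : Fin (m + k),
                (ev (fun i => x (cst i)) (m + k) (A')ᶜ b -
                  ev (fun i => x (cst i)) n A' a) ^ ((d : ℤ) - 1) := by
    intro A' _
    simp only [sTerm]
    rw [shuffleMul_eq, Finset.mul_sum, Finset.sum_mul]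
    simp only [sTerm]
  rw [Finset.sum_congr rfl step, ← Finset.sum_product']
  have hc1 : ∀ {p : Finset (Fin (n + (m + k))) × Finset (Fin (m + k))},
      p ∈ Finset.powersetCard n (Finset.univ : Finset (Fin (n + (m + k)))) ×ˢ
        Finset.powersetCard m (Finset.univ : Finset (Fin (m + k))) → p.1.card = n :=
    fun hp => (Finset.mem_powersetCard.mp (Finset.mem_product.mp hp).1).2
  have hc2 : ∀ {p : Finset (Fin (n + (m + k))) × Finset (Fin (m + k))},
      p ∈ Finset.powersetCard n (Finset.univ : Finset (Fin (n + (m + k)))) ×ˢ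
        Finset.powersetCard m (Finset.univ : Finset (Fin (m + k))) → p.2.card = m :=
    fun hp => (Finset.mem_powersetCard.mp (Finset.mem_product.mp hp).2).2
  have hq1 : ∀ {q : Finset (Fin (n + m + k)) × Finset (Fin (n + m + k))},
      q ∈ Dset n m k → q.1.card = n := fun hq => (Finset.mem_filter.mp hq).2.1
  have hq2 : ∀ {q : Finset (Fin (n + m + k)) × Finset (Fin (n + m + k))},
      q ∈ Dset n m k → q.2.card = m := fun hq => (Finset.mem_filter.mp hq).2.2.1
  have hq3 : ∀ {q : Finset (Fin (n + m + k)) × Finset (Fin (n + m + k))},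
      q ∈ Dset n m k → Disjoint q.1 q.2 := fun hq => (Finset.mem_filter.mp hq).2.2.2
  have himgsub : ∀ (A' : Finset (Fin (n + (m + k)))) (h : (A')ᶜ.card = m + k)
      (U : Finset (Fin (m + k))),
      Finset.image (⇑((A')ᶜ.orderEmbOfFin h)) U ⊆ (A')ᶜ := by
    intro A' h U y hy
    obtain ⟨b, -, rfl⟩ := Finset.mem_image.mp hy
    exact Finset.orderEmbOfFin_mem _ h b
  have hqsub : ∀ {q : Finset (Fin (n + m + k)) × Finset (Fin (n + m + k))},
      q ∈ Dset n m k → Finset.image icst q.2 ⊆ (Finset.image icst q.1)ᶜ := by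
    intro q hq y hy
    obtain ⟨t, ht, rfl⟩ := Finset.mem_image.mp hy
    refine Finset.mem_compl.mpr fun hmem => ?_
    obtain ⟨t', ht', he⟩ := Finset.mem_image.mp hmem
    exact Finset.disjoint_left.mp (hq3 hq) (hicst.injective he ▸ ht') ht
  refine Finset.sum_bij'
    (fun p hp => (Finset.image cst p.1,
      Finset.image cst (Finset.image (⇑((p.1)ᶜ.orderEmbOfFin (compl_card p.1 (hc1 hp)))) p.2)))
    (fun q hq => (Finset.image icst q.1,
      Finset.univ.filter fun b =>
        ((Finset.image icst q.1)ᶜ).orderEmbOfFin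
          (compl_card _ (card_image_mono hicst (hq1 hq))) b ∈ Finset.image icst q.2))
    ?_ ?_ ?_ ?_ ?_
  · -- hi : lands in Dset
    intro p hp
    refine Finset.mem_filter.mpr ⟨Finset.mem_univ _, ?_, ?_, ?_⟩
    · exact card_image_mono hcst (hc1 hp)
    · exact card_image_mono hcst (card_image_mono
        ((p.1)ᶜ.orderEmbOfFin (compl_card p.1 (hc1 hp))).strictMono (hc2 hp))
    · refine (Finset.disjoint_image hcst.injective).mpr ?_
      exact Finset.disjoint_left.mpr fun a ha hmem =>
        Finset.mem_compl.mp (himgsub p.1 (compl_card p.1 (hc1 hp)) p.2 hmem) ha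
  · -- hj : lands in product
    intro q hq
    refine Finset.mem_product.mpr ⟨?_, ?_⟩
    · exact Finset.mem_powersetCard.mpr ⟨Finset.subset_univ _,
        card_image_mono hicst (hq1 hq)⟩
    · refine Finset.mem_powersetCard.mpr ⟨Finset.subset_univ _, ?_⟩
      have himg := filter_image ((Finset.image icst q.1)ᶜ)
        (compl_card _ (card_image_mono hicst (hq1 hq))) (hqsub hq)
      have := congrArg Finset.card himg
      rwa [Finset.card_image_of_injective _
        (((Finset.image icst q.1)ᶜ).orderEmbOfFin
          (compl_card _ (card_image_mono hicst (hq1 hq)))).injective,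
        Finset.card_image_of_injective _ hicst.injective, hq2 hq] at this
  · -- left_inv
    intro p hp
    refine Prod.ext (hci p.1) ?_
    have key : ∀ (W : Finset (Fin (n + (m + k)))), W = p.1 →
        ∀ (h : Wᶜ.card = m + k) (V : Finset (Fin (n + (m + k)))),
        V = Finset.image (⇑((p.1)ᶜ.orderEmbOfFin (compl_card p.1 (hc1 hp)))) p.2 →
        (Finset.univ.filter fun b => Wᶜ.orderEmbOfFin h b ∈ V) = p.2 := by
      rintro W rfl h V rfl
      exact filter_preimage_image (p.1)ᶜ h p.2
    exact key _ (hci p.1) _ _ (hci _)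
  · -- right_inv
    intro q hq
    refine Prod.ext (hic q.1) ?_
    have himg := filter_image ((Finset.image icst q.1)ᶜ)
      (compl_card _ (card_image_mono hicst (hq1 hq))) (hqsub hq)
    exact (congrArg (Finset.image cst) himg).trans (hic q.2)
  · -- term equality
    intro p hp
    simp only [sTerm, bigTerm]
    set e1 := (p.1)ᶜ.orderEmbOfFin (compl_card p.1 (hc1 hp)) with he1
    set A := Finset.image cst p.1 with hA'
    set B := Finset.image cst (Finset.image (⇑e1) p.2) with hB'
    set S₂ := Finset.image cst ((p.1)ᶜ) with hS₂'
    have hA : A.card = n := card_image_mono hcst (hc1 hp)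
    have hU : p.2.card = m := hc2 hp
    have hS₂ : S₂.card = m + k := card_image_mono hcst (compl_card p.1 (hc1 hp))
    set eS₂ := S₂.orderEmbOfFin hS₂ with heS₂
    have hB : B.card = m := card_image_mono hcst
      (card_image_mono e1.strictMono hU)
    have hDisj : Disjoint A B := by
      refine (Finset.disjoint_image hcst.injective).mpr ?_
      exact Finset.disjoint_left.mpr fun a ha hmem =>
        Finset.mem_compl.mp (himgsub p.1 (compl_card p.1 (hc1 hp)) p.2 hmem) ha
    have hS₂A : S₂ = Aᶜ := image_compl_equiv ((finCongr (Nat.add_assoc n m k)).symm) p.1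
    have hBe : Finset.image (⇑eS₂) p.2 = B := by
      rw [hB', Finset.image_image]
      refine (Finset.image_congr fun b _ => ?_).symm
      exact (emb_image hcst ((p.1)ᶜ) (compl_card p.1 (hc1 hp)) b).symm ▸ rfl
    have hxA : ev (fun i => x (cst i)) n p.1 = ev x n A :=
      ev_comp_mono hcst x n p.1
    have hxS₂ : ev (fun i => x (cst i)) (m + k) ((p.1)ᶜ) = ev x (m + k) S₂ :=
      ev_comp_mono hcst x (m + k) ((p.1)ᶜ)
    have hevS₂ : ev x (m + k) S₂ = fun i => x (eS₂ i) := ev_eq x hS₂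
    have hU1 : ev (ev x (m + k) S₂) m p.2 = ev x m B := by
      rw [hevS₂, ev_comp_mono eS₂.strictMono, hBe]
    have hCC : Finset.image (⇑eS₂) ((p.2)ᶜ) = (A ∪ B)ᶜ := by
      rw [image_emb_compl S₂ hS₂ p.2, hBe, hS₂A, sdiff_eq, Finset.inf_eq_inter, ← Finset.compl_union]
    have hU2 : ev (ev x (m + k) S₂) k ((p.2)ᶜ) = ev x k (A ∪ B)ᶜ := by
      rw [hevS₂, ev_comp_mono eS₂.strictMono, hCC]
    have hCk : ((A ∪ B)ᶜ).card = k := by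
      refine compl_card (A ∪ B) ?_
      rw [Finset.card_union_of_disjoint hDisj, hA, hB]
    have hS₂BC : S₂ = B ∪ (A ∪ B)ᶜ := by rw [hS₂A, union_compl_eq hDisj]
    have hdBC : Disjoint B ((A ∪ B)ᶜ) :=
      disjoint_compl_right.mono_left Finset.subset_union_right
    have hout : (∏ a : Fin n, ∏ b : Fin (m + k),
          (ev x (m + k) S₂ b - ev x n A a) ^ ((d : ℤ) - 1))
        = (∏ a : Fin n, ∏ b : Fin m, (ev x m B b - ev x n A a) ^ ((d : ℤ) - 1)) *
          (∏ a : Fin n, ∏ c : Fin k,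
            (ev x k (A ∪ B)ᶜ c - ev x n A a) ^ ((d : ℤ) - 1)) := by
      rw [← Finset.prod_mul_distrib]
      refine Finset.prod_congr rfl fun a _ => ?_
      calc (∏ b : Fin (m + k), (ev x (m + k) S₂ b - ev x n A a) ^ ((d : ℤ) - 1))
          = ∏ b : Fin (m + k), (x (eS₂ b) - ev x n A a) ^ ((d : ℤ) - 1) := by
            rw [hevS₂]
        _ = ∏ t ∈ S₂, (x t - ev x n A a) ^ ((d : ℤ) - 1) :=
            prod_emb S₂ hS₂ (fun t => (x t - ev x n A a) ^ ((d : ℤ) - 1))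
        _ = (∏ t ∈ B, (x t - ev x n A a) ^ ((d : ℤ) - 1)) *
            (∏ t ∈ (A ∪ B)ᶜ, (x t - ev x n A a) ^ ((d : ℤ) - 1)) := by
            rw [hS₂BC, Finset.prod_union hdBC]
        _ = _ := by
            rw [← prod_emb B hB (fun t => (x t - ev x n A a) ^ ((d : ℤ) - 1)),
              ← prod_emb ((A ∪ B)ᶜ) hCk (fun t => (x t - ev x n A a) ^ ((d : ℤ) - 1)),
              ev_eq x hB, ev_eq x hCk]
    rw [hxA, hxS₂, hU1, hU2, hout]
    ring

/-- Associativity of the shuffle product for symmetric functions. -/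
theorem stmt0 (d : ℕ) {n m k : ℕ}
    (f1 : (Fin n → ℚ) → ℚ) (f2 : (Fin m → ℚ) → ℚ) (f3 : (Fin k → ℚ) → ℚ)
    (h1 : ∀ (σ : Equiv.Perm (Fin n)) (y : Fin n → ℚ), f1 (fun i => y (σ i)) = f1 y)
    (h2 : ∀ (σ : Equiv.Perm (Fin m)) (y : Fin m → ℚ), f2 (fun i => y (σ i)) = f2 y)
    (h3 : ∀ (σ : Equiv.Perm (Fin k)) (y : Fin k → ℚ), f3 (fun i => y (σ i)) = f3 y)
    (x : Fin (n + m + k) → ℚ) (hx : Function.Injective x) :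
    shuffleMul d (shuffleMul d f1 f2) f3 x =
      shuffleMul d f1 (shuffleMul d f2 f3)
        (fun i => x ((finCongr (Nat.add_assoc n m k)).symm i)) :=
  (lhs_eq d f1 f2 f3 x).trans (rhs_eq d f1 f2 f3 x).symm

end

end Stmt0
end

section
/- The classical limit series P_d^{cl}(z) := lim_{q^{1/2}→1} P_d(z,q^{1/2})/P_d(qz,q^{1/2}) ∈ 1 + zℤ[[z]] is algebraic and satisfies the functional equation P_d^{cl}(z) = 1 + (-1)^{d-1} z (P_d^{cl}(z))^d. -/
/- STATEMENT 6: The classical limit P_d^{cl}(z) = lim_{q^{1/2}→1} P_d(z)/P_d(qz)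
   exists in 1 + zℤ[[z]] and satisfies P_d^{cl}(z) = 1 + (-1)^{d-1} z (P_d^{cl}(z))^d.
   We work with coefficients in the field of rational functions ℚ(t), t = q^{1/2};
   P_d(qz) is `rescale (t²)` applied to P_d.  "The n-th coefficient of the ratio has a
   limit G_n at t = 1" is expressed by: it can be written p/q with q(1) ≠ 0 and
   G_n·q(1) = p(1).  (Note (-1)^{d-1} = (-1)^{d+1}.) -/

namespace Stmt6

noncomputable section

def t : RatFunc ℚ := RatFunc.X

/-- `P_d = ∑_{n≥0} (-q^{1/2})^{(1-d)n²} z^n / ((1-q)…(1-q^n))`, with `q = t²`. -/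
def Pd (d : ℕ) : PowerSeries (RatFunc ℚ) :=
  PowerSeries.mk fun n =>
    (-t) ^ ((1 - (d : ℤ)) * (n : ℤ) ^ 2) / ∏ k ∈ Finset.range n, (1 - t ^ (2 * (k + 1)))

open PowerSeries


def g (d : ℕ) : ℕ → ℤ
  | 0 => 1
  | (n+1) => (-1)^(d+1) *
      PowerSeries.coeff n ((PowerSeries.mk fun k => if _h : k ≤ n then g d k else 0)^d)
  termination_by n => n
  decreasing_by exact Nat.lt_succ_of_le _h

def G (d : ℕ) : PowerSeries ℤ := PowerSeries.mk (g d)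

lemma coeff_mul_congr {R : Type*} [CommRing R] {f f' h h' : PowerSeries R} {n : ℕ}
    (Hf : ∀ k ≤ n, coeff k f = coeff k f') (Hh : ∀ k ≤ n, coeff k h = coeff k h') :
    ∀ k ≤ n, coeff k (f * h) = coeff k (f' * h') := by
  intro k hk
  rw [coeff_mul, coeff_mul]
  refine Finset.sum_congr rfl fun x hx => ?_
  rw [Finset.HasAntidiagonal.mem_antidiagonal] at hx
  rw [Hf x.1 (by omega), Hh x.2 (by omega)]

lemma coeff_pow_congr {R : Type*} [CommRing R] {f f' : PowerSeries R} {n : ℕ}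
    (Hf : ∀ k ≤ n, coeff k f = coeff k f') (m : ℕ) :
    ∀ k ≤ n, coeff k (f ^ m) = coeff k (f' ^ m) := by
  induction m with
  | zero => intro k hk; rfl
  | succ m ih =>
      rw [pow_succ, pow_succ]
      exact coeff_mul_congr ih Hf

lemma G_constantCoeff (d : ℕ) : PowerSeries.constantCoeff (G d) = 1 := by
  simp [G, g, ← coeff_zero_eq_constantCoeff]

lemma G_eq (d : ℕ) :
    G d = 1 + PowerSeries.C ((-1 : ℤ) ^ (d + 1)) * PowerSeries.X * (G d) ^ d := by
  ext n
  cases n with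
  | zero => simp [G, g, coeff_zero_eq_constantCoeff]
  | succ n =>
      rw [map_add, mul_assoc, coeff_C_mul, coeff_succ_X_mul]
      have h1 : (coeff (n+1)) (1 : PowerSeries ℤ) = 0 := by
        simp
      rw [h1, zero_add]
      have h2 : ∀ k ≤ n, coeff k ((PowerSeries.mk fun k => if _h : k ≤ n then g d k else 0)) =
          coeff k (G d) := by
        intro k hk
        simp [G, hk]
      have h3 := coeff_pow_congr h2 d n le_rfl
      rw [show (coeff (n+1)) (G d) = g d (n+1) from by simp [G], g, h3]




def Reg (r : RatFunc ℚ) (v : ℚ) : Prop :=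
  ∃ p q : Polynomial ℚ, q.eval 1 ≠ 0 ∧
    r = algebraMap (Polynomial ℚ) (RatFunc ℚ) p / algebraMap (Polynomial ℚ) (RatFunc ℚ) q ∧
    v * q.eval 1 = p.eval 1

lemma am_ne_zero {q : Polynomial ℚ} (h : q.eval 1 ≠ 0) :
    algebraMap (Polynomial ℚ) (RatFunc ℚ) q ≠ 0 := by
  apply RatFunc.algebraMap_ne_zero
  intro h0; rw [h0] at h; simp at h

lemma reg_zero : Reg 0 0 := ⟨0, 1, by simp, by simp, by simp⟩

lemma reg_one : Reg 1 1 := ⟨1, 1, by simp, by simp, by simp⟩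

lemma reg_mul {r s : RatFunc ℚ} {v w : ℚ} (hr : Reg r v) (hs : Reg s w) :
    Reg (r * s) (v * w) := by
  obtain ⟨p, q, hq, hrpq, hv⟩ := hr
  obtain ⟨p', q', hq', hspq, hw⟩ := hs
  refine ⟨p * p', q * q', by simp [hq, hq'], ?_, ?_⟩
  · rw [hrpq, hspq, map_mul, map_mul, div_mul_div_comm]
  · simp only [Polynomial.eval_mul]
    linear_combination (Polynomial.eval 1 p') * hv + (v * Polynomial.eval 1 q) * hw

lemma reg_add {r s : RatFunc ℚ} {v w : ℚ} (hr : Reg r v) (hs : Reg s w) :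
    Reg (r + s) (v + w) := by
  obtain ⟨p, q, hq, hrpq, hv⟩ := hr
  obtain ⟨p', q', hq', hspq, hw⟩ := hs
  refine ⟨p * q' + p' * q, q * q', by simp [hq, hq'], ?_, ?_⟩
  · rw [hrpq, hspq, div_add_div _ _ (am_ne_zero hq) (am_ne_zero hq'), map_mul, map_add,
      map_mul, map_mul]
    ring
  · simp only [Polynomial.eval_mul, Polynomial.eval_add]
    linear_combination (Polynomial.eval 1 q') * hv + (Polynomial.eval 1 q) * hw

lemma reg_sum {ι : Type*} (s : Finset ι) (r : ι → RatFunc ℚ) (v : ι → ℚ)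
    (h : ∀ i ∈ s, Reg (r i) (v i)) : Reg (∑ i ∈ s, r i) (∑ i ∈ s, v i) := by
  classical
  induction s using Finset.induction_on with
  | empty => simpa using reg_zero
  | insert x s hx ih =>
      rw [Finset.sum_insert hx, Finset.sum_insert hx]
      exact reg_add (h _ (Finset.mem_insert_self _ _))
        (ih fun i hi => h i (Finset.mem_insert_of_mem hi))

lemma t_ne_zero : t ≠ 0 := RatFunc.X_ne_zero

lemma reg_t_zpow (m : ℤ) : Reg (t ^ m) 1 := by
  refine ⟨Polynomial.X ^ m.toNat, Polynomial.X ^ (-m).toNat, by simp, ?_, by simp⟩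
  rw [map_pow, map_pow, RatFunc.algebraMap_X]
  rw [eq_div_iff (by exact pow_ne_zero _ RatFunc.X_ne_zero)]
  show t ^ m * t ^ ((-m).toNat) = t ^ (m.toNat)
  rw [← zpow_natCast t ((-m).toNat), ← zpow_natCast t m.toNat, ← zpow_add₀ t_ne_zero]
  congr 1
  omega

lemma reg_neg_one_pow (k : ℕ) : Reg ((-1 : RatFunc ℚ) ^ k) ((-1 : ℚ) ^ k) := by
  refine ⟨(-1 : Polynomial ℚ) ^ k, 1, by simp, ?_, by simp⟩
  rw [map_one, div_one, map_pow, map_neg, map_one]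




lemma neg_t_ne_zero : -t ≠ 0 := neg_ne_zero.mpr t_ne_zero

lemma one_sub_t_pow_ne (k : ℕ) (hk : k ≠ 0) : (1 : RatFunc ℚ) - t ^ k ≠ 0 := by
  intro h
  have h1 : t ^ k = 1 := by linear_combination -h
  have h2 : algebraMap (Polynomial ℚ) (RatFunc ℚ) (Polynomial.X ^ k) =
      algebraMap (Polynomial ℚ) (RatFunc ℚ) 1 := by
    rw [map_pow, RatFunc.algebraMap_X, map_one]; exact h1
  have h3 := RatFunc.algebraMap_injective ℚ h2
  have h4 := congrArg (Polynomial.eval 0) h3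
  simp [zero_pow hk] at h4

lemma D_ne_zero (n : ℕ) : (∏ k ∈ Finset.range n, (1 - t ^ (2 * (k + 1)))) ≠ 0 :=
  Finset.prod_ne_zero_iff.mpr fun k _ => one_sub_t_pow_ne _ (by omega)

lemma sign_eq (d : ℕ) (n : ℕ) :
    ((-1 : RatFunc ℚ)) ^ ((1 - (d : ℤ)) * (2 * (n : ℤ) + 1)) = (-1 : RatFunc ℚ) ^ (d + 1) := by
  rcases Nat.even_or_odd (d + 1) with h | h
  · rw [h.neg_one_pow]
    obtain ⟨k, hk⟩ := h
    have hd : (d : ℤ) = 2 * k - 1 := by omega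
    exact Even.neg_one_zpow ⟨(1 - (k:ℤ)) * (2*(n:ℤ)+1), by rw [hd]; ring⟩
  · rw [h.neg_one_pow]
    obtain ⟨k, hk⟩ := h
    have hd : (d : ℤ) = 2 * k := by omega
    exact Odd.neg_one_zpow ⟨(n:ℤ) - k*(2*(n:ℤ)+1), by rw [hd]; ring⟩

lemma key (d n : ℕ) :
    PowerSeries.coeff (n+1) (Pd d) * (1 - t ^ (2*(n+1))) =
    ((-1 : RatFunc ℚ)^(d+1) * t ^ ((1:ℤ) - d) * (t ^ ((2:ℤ) - 2*d))^(n:ℕ)) *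
      PowerSeries.coeff n (Pd d) := by
  simp only [Pd, coeff_mk]
  rw [Finset.prod_range_succ]
  rw [div_mul_eq_mul_div, mul_comm ((∏ k ∈ Finset.range n, (1 - t ^ (2 * (k + 1)))))
    (1 - t ^ (2 * (n + 1))), ← div_div, mul_div_assoc,
    div_self (one_sub_t_pow_ne _ (by omega)), mul_one]
  rw [← mul_div_assoc]
  congr 1
  -- (-t)^E' = c * (-t)^E
  have hw : (t ^ ((2:ℤ) - 2*d))^(n:ℕ) = t ^ (((2:ℤ) - 2*d) * n) := by
    rw [← zpow_natCast (t ^ ((2:ℤ) - 2*d)) n, ← zpow_mul]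
  have hE : (1 - (d:ℤ)) * ((n+1 : ℕ) : ℤ)^2
      = (1 - (d:ℤ)) * (2*(n:ℤ)+1) + (1 - (d:ℤ)) * (n:ℤ)^2 := by push_cast; ring
  rw [hE, hw]
  have hnt : ∀ m : ℤ, (-t) ^ m = (-1 : RatFunc ℚ) ^ m * t ^ m := by
    intro m
    rw [show -t = (-1 : RatFunc ℚ) * t from by ring, mul_zpow]
  rw [zpow_add₀ neg_t_ne_zero, hnt ((1 - (d:ℤ)) * (2*(n:ℤ)+1)), sign_eq]
  rw [show ((1:ℤ) - d) * (2*(n:ℤ)+1) = ((1:ℤ) - d) + ((2:ℤ) - 2*d) * n from by ring,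
    zpow_add₀ t_ne_zero]
  ring

lemma Pd_fe (d : ℕ) :
    Pd d = PowerSeries.rescale (t^2) (Pd d) +
      PowerSeries.C ((-1 : RatFunc ℚ)^(d+1) * t ^ ((1:ℤ) - d)) *
        (PowerSeries.X * PowerSeries.rescale (t ^ ((2:ℤ) - 2*d)) (Pd d)) := by
  ext n
  rw [map_add, coeff_C_mul]
  cases n with
  | zero =>
      simp only [coeff_zero_eq_constantCoeff]
      rw [map_mul]
      simp [coeff_rescale, ← coeff_zero_eq_constantCoeff]
  | succ n =>
      rw [coeff_succ_X_mul, coeff_rescale, coeff_rescale]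
      have hk := key d n
      have h2 : (t^2)^(n+1) = t ^ (2*(n+1)) := by rw [← pow_mul]
      rw [h2]
      linear_combination hk

lemma constantCoeff_Pd (d : ℕ) : PowerSeries.constantCoeff (Pd d) = 1 := by
  rw [← coeff_zero_eq_constantCoeff]
  simp [Pd]

lemma constantCoeff_rescale_Pd (d : ℕ) (a : RatFunc ℚ) :
    PowerSeries.constantCoeff (PowerSeries.rescale a (Pd d)) = 1 := by
  rw [← coeff_zero_eq_constantCoeff, coeff_rescale, pow_zero, one_mul,
    coeff_zero_eq_constantCoeff, constantCoeff_Pd]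

def Rr (d : ℕ) : PowerSeries (RatFunc ℚ) := Pd d * (PowerSeries.rescale (t^2) (Pd d))⁻¹

lemma rescale_Pd_inv (d : ℕ) (a b : RatFunc ℚ) :
    PowerSeries.rescale a (PowerSeries.rescale b (Pd d))⁻¹ =
      (PowerSeries.rescale a (PowerSeries.rescale b (Pd d)))⁻¹ := by
  rw [PowerSeries.eq_inv_iff_mul_eq_one (by rw [← coeff_zero_eq_constantCoeff, coeff_rescale,
    pow_zero, one_mul, coeff_zero_eq_constantCoeff, constantCoeff_rescale_Pd]; exact one_ne_zero)]
  rw [← map_mul, mul_comm, PowerSeries.mul_inv_cancel _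
    (by rw [constantCoeff_rescale_Pd]; exact one_ne_zero), map_one]

lemma constantCoeff_ne (d : ℕ) (a : RatFunc ℚ) :
    PowerSeries.constantCoeff (PowerSeries.rescale a (Pd d)) ≠ 0 := by
  rw [constantCoeff_rescale_Pd]; exact one_ne_zero

lemma tele (d : ℕ) : ∀ m : ℕ,
    PowerSeries.rescale (t ^ ((2:ℤ) - 2*m)) (Pd d) * (PowerSeries.rescale (t^2) (Pd d))⁻¹ =
      ∏ j ∈ Finset.range m, PowerSeries.rescale (t ^ (-2 * (j:ℤ))) (Rr d) := by
  intro m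
  induction m with
  | zero =>
      rw [Finset.range_zero, Finset.prod_empty]
      rw [show ((2:ℤ) - 2*(0:ℕ)) = ((2:ℕ):ℤ) from by norm_num, zpow_natCast]
      exact PowerSeries.mul_inv_cancel _ (constantCoeff_ne d _)
  | succ m ih =>
      rw [Finset.prod_range_succ, ← ih]
      rw [Rr, map_mul, rescale_Pd_inv, rescale_rescale]
      have ha : t ^ 2 * t ^ (-2 * (m:ℤ)) = t ^ ((2:ℤ) - 2*m) := by
        rw [show (t:RatFunc ℚ) ^ 2 = t ^ ((2:ℕ):ℤ) from (zpow_natCast t 2).symm,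
          ← zpow_add₀ t_ne_zero]
        congr 1
      rw [ha]
      have hc : ((2:ℤ) - 2*((m:ℕ)+1:ℕ)) = -2 * (m:ℤ) := by push_cast; ring
      rw [hc]
      have hu := PowerSeries.mul_inv_cancel _ (constantCoeff_ne d (t ^ ((2:ℤ) - 2*m)))
      refine Eq.symm ?_
      calc PowerSeries.rescale (t ^ ((2:ℤ) - 2*m)) (Pd d) * (PowerSeries.rescale (t^2) (Pd d))⁻¹ *
            (PowerSeries.rescale (t ^ (-2 * (m:ℤ))) (Pd d) *
              (PowerSeries.rescale (t ^ ((2:ℤ) - 2*m)) (Pd d))⁻¹)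
          = (PowerSeries.rescale (t ^ ((2:ℤ) - 2*m)) (Pd d) *
              (PowerSeries.rescale (t ^ ((2:ℤ) - 2*m)) (Pd d))⁻¹) *
            (PowerSeries.rescale (t ^ (-2 * (m:ℤ))) (Pd d) *
              (PowerSeries.rescale (t^2) (Pd d))⁻¹) := by ring
        _ = PowerSeries.rescale (t ^ (-2 * (m:ℤ))) (Pd d) *
              (PowerSeries.rescale (t^2) (Pd d))⁻¹ := by rw [hu, one_mul]

lemma master (d : ℕ) :
    Rr d = 1 + PowerSeries.C ((-1 : RatFunc ℚ)^(d+1) * t ^ ((1:ℤ) - d)) *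
      (PowerSeries.X * ∏ j ∈ Finset.range d, PowerSeries.rescale (t ^ (-2 * (j:ℤ))) (Rr d)) := by
  have h := congrArg (· * (PowerSeries.rescale (t^2) (Pd d))⁻¹) (Pd_fe d)
  rw [add_mul] at h
  rw [PowerSeries.mul_inv_cancel _ (constantCoeff_ne d _)] at h
  rw [show PowerSeries.C ((-1 : RatFunc ℚ)^(d+1) * t ^ ((1:ℤ) - d)) *
      (PowerSeries.X * PowerSeries.rescale (t ^ ((2:ℤ) - 2*d)) (Pd d)) *
      (PowerSeries.rescale (t^2) (Pd d))⁻¹ =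
      PowerSeries.C ((-1 : RatFunc ℚ)^(d+1) * t ^ ((1:ℤ) - d)) *
      (PowerSeries.X * (PowerSeries.rescale (t ^ ((2:ℤ) - 2*d)) (Pd d) *
        (PowerSeries.rescale (t^2) (Pd d))⁻¹)) from by ring] at h
  rw [tele d d] at h
  exact h


-- Part D
def Gq (d : ℕ) : PowerSeries ℚ := PowerSeries.map (Int.castRingHom ℚ) (G d)

lemma coeff_Gq (d n : ℕ) : PowerSeries.coeff n (Gq d) = (g d n : ℚ) := by
  rw [Gq, coeff_map]
  simp [G]

lemma Gq_succ (d n : ℕ) :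
    ((g d (n+1) : ℚ)) = (-1 : ℚ)^(d+1) * PowerSeries.coeff n ((Gq d)^d) := by
  have hZ : (PowerSeries.coeff (n+1)) (G d) = (-1 : ℤ)^(d+1) *
      PowerSeries.coeff n ((G d)^d) := by
    have h := congrArg (PowerSeries.coeff (n+1)) (G_eq d)
    rw [map_add, mul_assoc, coeff_C_mul, coeff_succ_X_mul, coeff_one,
      if_neg (Nat.succ_ne_zero n), zero_add] at h
    exact h
  have h1 : (PowerSeries.coeff (n+1)) (G d) = g d (n+1) := by simp [G]
  have h2 : PowerSeries.coeff n ((Gq d)^d) =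
      ((PowerSeries.coeff n ((G d)^d) : ℤ) : ℚ) := by
    rw [Gq, ← map_pow, coeff_map]
    rfl
  rw [h2, ← h1, hZ]
  push_cast
  ring

lemma regLE_mul {f h : PowerSeries (RatFunc ℚ)} {F H : PowerSeries ℚ} {n : ℕ}
    (Hf : ∀ k ≤ n, Reg (PowerSeries.coeff k f) (PowerSeries.coeff k F))
    (Hh : ∀ k ≤ n, Reg (PowerSeries.coeff k h) (PowerSeries.coeff k H)) :
    ∀ k ≤ n, Reg (PowerSeries.coeff k (f * h)) (PowerSeries.coeff k (F * H)) := by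
  intro k hk
  rw [coeff_mul, coeff_mul]
  refine reg_sum _ _ _ fun x hx => ?_
  rw [Finset.HasAntidiagonal.mem_antidiagonal] at hx
  exact reg_mul (Hf x.1 (by omega)) (Hh x.2 (by omega))

lemma prodReg (d n : ℕ)
    (ih : ∀ k ≤ n, Reg (PowerSeries.coeff k (Rr d)) ((g d k : ℚ))) (m : ℕ) :
    ∀ k ≤ n, Reg (PowerSeries.coeff k
        (∏ j ∈ Finset.range m, PowerSeries.rescale (t ^ (-2 * (j:ℤ))) (Rr d)))
      (PowerSeries.coeff k ((Gq d) ^ m)) := by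
  induction m with
  | zero =>
      intro k hk
      rw [Finset.range_zero, Finset.prod_empty, pow_zero, coeff_one, coeff_one]
      split
      · exact reg_one
      · exact reg_zero
  | succ m ihm =>
      rw [Finset.prod_range_succ, pow_succ]
      refine regLE_mul ihm ?_
      intro k hk
      rw [coeff_rescale, coeff_Gq]
      have hz : (t ^ (-2 * (m:ℤ)))^k = t ^ ((-2 * (m:ℤ)) * k) := by
        rw [← zpow_natCast (t ^ (-2 * (m:ℤ))) k, ← zpow_mul]
      rw [hz]
      have := reg_mul (reg_t_zpow ((-2 * (m:ℤ)) * k)) (ih k hk)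
      rwa [one_mul] at this

lemma main (d : ℕ) (n : ℕ) : Reg (PowerSeries.coeff n (Rr d)) ((g d n : ℚ)) := by
  induction n using Nat.strong_induction_on with
  | _ n ih =>
    have h := congrArg (PowerSeries.coeff n) (master d)
    rw [map_add, coeff_C_mul] at h
    cases n with
    | zero =>
        rw [coeff_zero_eq_constantCoeff] at h
        simp only [map_one, map_mul, constantCoeff_X, zero_mul, mul_zero, add_zero] at h
        rw [coeff_zero_eq_constantCoeff, h]
        have hg : ((g d 0 : ℚ)) = 1 := by simp [g]
        rw [hg]
        exact reg_one
    | succ n =>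
        rw [coeff_one, if_neg (Nat.succ_ne_zero n), zero_add, coeff_succ_X_mul] at h
        rw [h, Gq_succ d n]
        have hc : Reg ((-1 : RatFunc ℚ)^(d+1) * t ^ ((1:ℤ) - d)) ((-1 : ℚ)^(d+1)) := by
          have := reg_mul (reg_neg_one_pow (d+1)) (reg_t_zpow ((1:ℤ) - d))
          rwa [mul_one] at this
        exact reg_mul hc (prodReg d n (fun k hk => ih k (Nat.lt_succ_of_le hk)) d n le_rfl)


theorem stmt6 (d : ℕ) :
    ∃ G : PowerSeries ℤ,
      PowerSeries.constantCoeff G = 1 ∧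
      G = 1 + PowerSeries.C ((-1 : ℤ) ^ (d + 1)) * PowerSeries.X * G ^ d ∧
      ∀ n : ℕ, ∃ p q : Polynomial ℚ,
        Polynomial.eval 1 q ≠ 0 ∧
        PowerSeries.coeff n (Pd d * (PowerSeries.rescale (t ^ 2) (Pd d))⁻¹) =
          algebraMap (Polynomial ℚ) (RatFunc ℚ) p / algebraMap (Polynomial ℚ) (RatFunc ℚ) q ∧
        ((PowerSeries.coeff (R := ℤ) n G : ℚ)) * Polynomial.eval 1 q = Polynomial.eval 1 p := by
  refine ⟨G d, G_constantCoeff d, G_eq d, fun n => ?_⟩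
  obtain ⟨p, q, hq, hr, hv⟩ := main d n
  refine ⟨p, q, hq, hr, ?_⟩
  have : ((PowerSeries.coeff (R := ℤ) n (G d) : ℚ)) = ((g d n : ℚ)) := by simp [G]
  rw [this]
  exact hv



end

end Stmt6
end

section
/- Given a commutative ring with a group homomorphism ε: ℤ^I → ℤ/2ℤ and an algebra H graded by ℤ_{≥0}^I with a ℤ/2ℤ-valued bilinear form β on (ℤ/2ℤ)^I satisfying β(γ,γ)=0 for all γ, choose a bilinear form ψ with ψ(γ1,γ2)+ψ(γ2,γ1)=β(γ1,γ2). If the original product satisfies a·b = (-1)^{β(γ1,γ2)+ε(γ1)ε(γ2)} b·a for a ∈ H_{γ1}, b ∈ H_{γ2}, then the modified product a⋆b := (-1)^{ψ(γ1,γ2)} a·b is associative and supercommutative with parity ε: a⋆b = (-1)^{ε(γ1)ε(γ2)} b⋆a. -/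
/- STATEMENT 7: Given a ℤ_{≥0}^I-graded algebra H whose product satisfies
   a·b = (-1)^{β(γ1,γ2)+ε(γ1)ε(γ2)} b·a on homogeneous components, and a bilinear form ψ
   with ψ(γ1,γ2)+ψ(γ2,γ1)=β(γ1,γ2), the modified product a⋆b := (-1)^{ψ(γ1,γ2)} a·b is
   associative and supercommutative with parity ε.  Graded components are modelled by
   a family `A : (I → ℕ) → Type` with a graded multiplication (`GradedMonoid.GMul`);
   equalities across different degrees are stated in the total space `GradedMonoid A`. -/

namespace Stmt7

open GradedMonoid

private lemma chi_add (a b : ZMod 2) :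
    ((-1:ℤ) ^ (a + b).val) = (-1) ^ a.val * (-1) ^ b.val := by revert a b; decide

private lemma chi_sq (a : ZMod 2) : ((-1:ℤ) ^ a.val) * (-1) ^ a.val = 1 := by revert a; decide

private lemma smul_mk_congr {I : Type*} {A : (I → ℕ) → Type*} [∀ γ, AddCommGroup (A γ)]
    (c : ℤ) {γ γ' : I → ℕ} {a : A γ} {b : A γ'}
    (h : GradedMonoid.mk γ a = GradedMonoid.mk γ' b) :
    GradedMonoid.mk γ (c • a) = GradedMonoid.mk γ' (c • b) := by
  obtain ⟨rfl, h2⟩ := Sigma.mk.inj_iff.mp h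
  rw [eq_of_heq h2]


theorem stmt7 {I : Type*} (A : (I → ℕ) → Type*) [∀ γ, AddCommGroup (A γ)]
    [GradedMonoid.GMul A]
    -- the product is ℤ-bilinear
    (hsmul_left : ∀ (c : ℤ) {γ1 γ2 : I → ℕ} (x : A γ1) (y : A γ2),
      GradedMonoid.GMul.mul (c • x) y = c • GradedMonoid.GMul.mul x y)
    (hsmul_right : ∀ (c : ℤ) {γ1 γ2 : I → ℕ} (x : A γ1) (y : A γ2),
      GradedMonoid.GMul.mul x (c • y) = c • GradedMonoid.GMul.mul x y)
    -- and associative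
    (hassoc : ∀ {γ1 γ2 γ3 : I → ℕ} (x : A γ1) (y : A γ2) (z : A γ3),
      GradedMonoid.mk ((γ1 + γ2) + γ3)
          (GradedMonoid.GMul.mul (GradedMonoid.GMul.mul x y) z) =
        GradedMonoid.mk (γ1 + (γ2 + γ3))
          (GradedMonoid.GMul.mul x (GradedMonoid.GMul.mul y z)))
    (ε : (I → ℕ) → ZMod 2) (hε : ∀ γ1 γ2, ε (γ1 + γ2) = ε γ1 + ε γ2)
    (β ψ : (I → ℕ) → (I → ℕ) → ZMod 2)
    (hβquad : ∀ γ, β γ γ = 0)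
    (hψβ : ∀ γ1 γ2, ψ γ1 γ2 + ψ γ2 γ1 = β γ1 γ2)
    (hψl : ∀ γ1 γ2 γ3, ψ (γ1 + γ2) γ3 = ψ γ1 γ3 + ψ γ2 γ3)
    (hψr : ∀ γ1 γ2 γ3, ψ γ1 (γ2 + γ3) = ψ γ1 γ2 + ψ γ1 γ3)
    -- the commutation rule for the original product
    (hcomm : ∀ {γ1 γ2 : I → ℕ} (x : A γ1) (y : A γ2),
      GradedMonoid.mk (γ1 + γ2) (GradedMonoid.GMul.mul x y) =
        GradedMonoid.mk (γ2 + γ1)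
          ((-1 : ℤ) ^ (β γ1 γ2 + ε γ1 * ε γ2).val • GradedMonoid.GMul.mul y x))
    -- the modified product ⋆
    (star : ∀ {γ1 γ2 : I → ℕ}, A γ1 → A γ2 → A (γ1 + γ2))
    (hstar : ∀ {γ1 γ2 : I → ℕ} (x : A γ1) (y : A γ2),
      star x y = (-1 : ℤ) ^ (ψ γ1 γ2).val • GradedMonoid.GMul.mul x y) :
    (∀ {γ1 γ2 γ3 : I → ℕ} (x : A γ1) (y : A γ2) (z : A γ3),
      GradedMonoid.mk ((γ1 + γ2) + γ3) (star (star x y) z) =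
        GradedMonoid.mk (γ1 + (γ2 + γ3)) (star x (star y z))) ∧
    (∀ {γ1 γ2 : I → ℕ} (x : A γ1) (y : A γ2),
      GradedMonoid.mk (γ1 + γ2) (star x y) =
        GradedMonoid.mk (γ2 + γ1) ((-1 : ℤ) ^ (ε γ1 * ε γ2).val • star y x)) := by

  constructor
  · intro γ1 γ2 γ3 x y z
    rw [hstar, hstar, hstar, hstar, hsmul_left, hsmul_right, smul_smul, smul_smul]
    have hc : ((-1:ℤ) ^ (ψ (γ1 + γ2) γ3).val * (-1) ^ (ψ γ1 γ2).val)
        = ((-1:ℤ) ^ (ψ γ1 (γ2 + γ3)).val * (-1) ^ (ψ γ2 γ3).val) := by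
      rw [hψl, hψr, chi_add, chi_add]; ring
    rw [hc]
    exact smul_mk_congr _ (hassoc x y z)
  · intro γ1 γ2 x y
    rw [hstar, hstar]
    have h1 := smul_mk_congr ((-1:ℤ) ^ (ψ γ1 γ2).val) (hcomm x y)
    rw [smul_smul] at h1
    rw [h1, smul_smul]
    have hc2 : (-1:ℤ) ^ (ψ γ1 γ2).val * (-1) ^ (β γ1 γ2 + ε γ1 * ε γ2).val
        = (-1:ℤ) ^ (ε γ1 * ε γ2).val * (-1) ^ (ψ γ2 γ1).val := by
      rw [← hψβ, chi_add, chi_add]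
      calc (-1:ℤ) ^ (ψ γ1 γ2).val *
            ((-1) ^ (ψ γ1 γ2).val * (-1) ^ (ψ γ2 γ1).val * (-1) ^ (ε γ1 * ε γ2).val)
          = ((-1:ℤ) ^ (ψ γ1 γ2).val * (-1) ^ (ψ γ1 γ2).val) *
            ((-1) ^ (ε γ1 * ε γ2).val * (-1) ^ (ψ γ2 γ1).val) := by ring
        _ = (-1) ^ (ε γ1 * ε γ2).val * (-1) ^ (ψ γ2 γ1).val := by rw [chi_sq, one_mul]
    rw [hc2]

end Stmt7
end

section
/- In the quantum torus over ℚ(q^{1/2}) with generators ê_1, ê_2, ê_{12} satisfying ê_1·ê_2 = q^{-1} ê_2·ê_1 = -q^{-1/2} ê_{12}, the pentagon-type identity (q^{1/2}ê_1;q)_∞ · (q^{1/2}ê_2;q)_∞ = (q^{1/2}ê_2;q)_∞ · (q^{1/2}ê_{12};q)_∞ · (q^{1/2}ê_1;q)_∞ holds. -/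
/- STATEMENT 10: the pentagon-type identity
   (q^{1/2}ê_1;q)_∞ (q^{1/2}ê_2;q)_∞ = (q^{1/2}ê_2;q)_∞ (q^{1/2}ê_{12};q)_∞ (q^{1/2}ê_1;q)_∞
   in the completed quantum torus with ê_1ê_2 = q^{-1}ê_2ê_1, ê_{12} = -q^{1/2}ê_1ê_2.
   The completed quantum torus is modelled concretely: its elements are functions
   (ℕ×ℕ) → ℚ(t) (the coefficient of the normally ordered monomial ê_1^{a}ê_2^{b}), with
   the twisted multiplication coming from ê_2^{a₂}ê_1^{b₁} = q^{a₂b₁} ê_1^{b₁}ê_2^{a₂},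
   where t = q^{1/2}.  The quantum dilogarithms are given by their expansions:
   (q^{1/2}x;q)_∞ = ∑_n (-1)^n t^{n²} x^n/(q;q)_n; in particular
   (q^{1/2}ê_{12};q)_∞ has coefficient q^{n²}/(q;q)_n at ê_1^nê_2^n. -/

namespace Stmt10

noncomputable section

abbrev F := RatFunc ℚ

def t : F := RatFunc.X

def q : F := t ^ 2

/-- `(q;q)_n` -/
def qfac (n : ℕ) : F := ∏ k ∈ Finset.range n, (1 - q ^ (k + 1))

/-- An element of the (completed) quantum torus: the coefficients of the normally ordered
monomials `ê₁^a ê₂^b`. -/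
abbrev M := ℕ × ℕ → F

/-- Multiplication in the quantum torus: `ê₂^{a₂} ê₁^{b₁} = q^{a₂ b₁} ê₁^{b₁} ê₂^{a₂}`. -/
def mulM (f g : M) : M := fun c =>
  ∑ a1 ∈ Finset.range (c.1 + 1), ∑ a2 ∈ Finset.range (c.2 + 1),
    f (a1, a2) * g (c.1 - a1, c.2 - a2) * q ^ (a2 * (c.1 - a1))

/-- `(q^{1/2} ê₁; q)_∞` -/
def A1 : M := fun c => if c.2 = 0 then (-1 : F) ^ c.1 * t ^ (c.1 ^ 2) / qfac c.1 else 0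

/-- `(q^{1/2} ê₂; q)_∞` -/
def A2 : M := fun c => if c.1 = 0 then (-1 : F) ^ c.2 * t ^ (c.2 ^ 2) / qfac c.2 else 0

/-- `(q^{1/2} ê₁₂; q)_∞`, where `ê₁₂ = -q^{1/2} ê₁ ê₂` -/
def A12 : M := fun c => if c.1 = c.2 then q ^ (c.1 ^ 2) / qfac c.1 else 0


lemma qfac_zero : qfac 0 = 1 := by simp [qfac]

lemma qfac_succ (n : ℕ) : qfac (n+1) = qfac n * (1 - q ^ (n+1)) :=
  Finset.prod_range_succ _ _

lemma q_pow_ne_one (n : ℕ) : q ^ (n+1) ≠ 1 := by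
  intro h
  have hX : (algebraMap (Polynomial ℚ) F) (Polynomial.X ^ (2*(n+1))) =
      (algebraMap (Polynomial ℚ) F) 1 := by
    rw [map_pow, map_one, RatFunc.algebraMap_X, ← h, q, t]
    ring
  have h2 : (Polynomial.X : Polynomial ℚ) ^ (2*(n+1)) = 1 :=
    IsFractionRing.injective (Polynomial ℚ) F hX
  have := congrArg Polynomial.natDegree h2
  simp [Polynomial.natDegree_X_pow] at this

lemma one_sub_q_pow_ne_zero (n : ℕ) : (1 : F) - q ^ (n+1) ≠ 0 :=
  sub_ne_zero.mpr (Ne.symm (q_pow_ne_one n))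

lemma qfac_ne_zero (n : ℕ) : qfac n ≠ 0 :=
  Finset.prod_ne_zero_iff.mpr fun k _ => one_sub_q_pow_ne_zero k

/-- The generic summand of the key `q`-series identity. -/
def g (a b k : ℕ) : F := q ^ ((a-k)*(b-k)) / (qfac k * qfac (a-k) * qfac (b-k))

lemma frac_eq (c1 n1 d1 c2 n2 d2 c3 n3 d3 : F) (h1 : d1 ≠ 0) (h2 : d2 ≠ 0)
    (h3 : d3 ≠ 0) (h : c1 * n1 * (d2 * d3) = (c2 * n2 * d3 + c3 * n3 * d2) * d1) :
    c1 * (n1 / d1) = c2 * (n2 / d2) + c3 * (n3 / d3) := by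
  rw [mul_div_assoc', mul_div_assoc', mul_div_assoc', div_add_div _ _ h2 h3,
    div_eq_div_iff h1 (mul_ne_zero h2 h3)]
  linear_combination h

lemma pointwise0 (a b : ℕ) : (1 - q^(b+1)) * g a (b+1) 0 = q^a * g a b 0 := by
  simp only [g, Nat.sub_zero, qfac_zero, qfac_succ]
  have h1 := qfac_ne_zero a
  have h2 := qfac_ne_zero b
  have h3 := one_sub_q_pow_ne_zero b
  field_simp
  ring

lemma pointwiseS (a b j : ℕ) (hj : j < a) :
    (1 - q^(b+1)) * (if j+1 ≤ b+1 then g a (b+1) (j+1) else 0)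
      = (if j+1 ≤ b then q^(a-(j+1)) * g a b (j+1) else 0)
        + (if j ≤ b then (1 - q^(a-j)) * g a b j else 0) := by
  by_cases hjb : j ≤ b
  · obtain ⟨x, rfl⟩ : ∃ x, a = j + 1 + x := ⟨a - (j+1), by omega⟩
    rcases Nat.lt_or_ge j b with hlt | hge
    · obtain ⟨y, rfl⟩ : ∃ y, b = j + 1 + y := ⟨b - (j+1), by omega⟩
      rw [if_pos (by omega), if_pos (by omega), if_pos (by omega)]
      simp only [g]
      have e1 : j + 1 + x - (j+1) = x := by omega
      have e2 : j + 1 + y - (j+1) = y := by omega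
      have e3 : j + 1 + y + 1 - (j+1) = y + 1 := by omega
      have e4 : j + 1 + x - j = x + 1 := by omega
      have e5 : j + 1 + y - j = y + 1 := by omega
      rw [e1, e2, e3, e4, e5]
      apply frac_eq
      · exact mul_ne_zero (mul_ne_zero (qfac_ne_zero _) (qfac_ne_zero _)) (qfac_ne_zero _)
      · exact mul_ne_zero (mul_ne_zero (qfac_ne_zero _) (qfac_ne_zero _)) (qfac_ne_zero _)
      · exact mul_ne_zero (mul_ne_zero (qfac_ne_zero _) (qfac_ne_zero _)) (qfac_ne_zero _)
      · rw [qfac_succ j, qfac_succ x, qfac_succ y,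
          show j + 1 + y + 1 = (j + y + 1) + 1 by omega, pow_succ, pow_add, pow_add]
        ring
    · have hj' : j = b := by omega
      subst hj'
      rw [if_pos (by omega), if_neg (by omega), if_pos (by omega)]
      simp only [g]
      have e1 : j + 1 + x - (j+1) = x := by omega
      have e3 : j + 1 - (j+1) = 0 := by omega
      have e4 : j + 1 + x - j = x + 1 := by omega
      have e5 : j - j = 0 := by omega
      rw [e1, e3, e4, e5]
      simp only [qfac_zero, Nat.mul_zero, Nat.zero_mul, pow_zero, qfac_succ]
      have h1 := qfac_ne_zero j
      have h2 := qfac_ne_zero x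
      have h3 := one_sub_q_pow_ne_zero j
      have h4 := one_sub_q_pow_ne_zero x
      field_simp
      ring
  · rw [if_neg (by omega), if_neg (by omega), if_neg (by omega)]
    simp

lemma key (b a : ℕ) :
    (∑ k ∈ Finset.range (a+1), if k ≤ b then g a b k else 0)
      = 1 / (qfac a * qfac b) := by
  induction b generalizing a with
  | zero =>
      rw [Finset.sum_eq_single 0]
      · simp [g, qfac_zero]
      · intro k _ hk
        rw [if_neg (by omega)]
      · intro h
        exact absurd (Finset.mem_range.mpr (by omega)) h
  | succ b IH =>
      have h1 : (1 - q^(b+1)) *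
          (∑ k ∈ Finset.range (a+1), if k ≤ b+1 then g a (b+1) k else 0)
          = ∑ k ∈ Finset.range (a+1), (if k ≤ b then g a b k else 0) := by
        rw [Finset.mul_sum, Finset.sum_range_succ']
        rw [if_pos (Nat.zero_le _), pointwise0 a b]
        have e1 : ∑ i ∈ Finset.range a,
            (1 - q^(b+1)) * (if i+1 ≤ b+1 then g a (b+1) (i+1) else 0)
            = ∑ i ∈ Finset.range a,
              ((if i+1 ≤ b then q^(a-(i+1)) * g a b (i+1) else 0)
                + (if i ≤ b then (1 - q^(a-i)) * g a b i else 0)) :=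
          Finset.sum_congr rfl fun i hi => pointwiseS a b i (Finset.mem_range.mp hi)
        rw [e1, Finset.sum_add_distrib]
        have e2 : (∑ i ∈ Finset.range a, (if i+1 ≤ b then q^(a-(i+1)) * g a b (i+1) else 0))
            + q^a * g a b 0
            = ∑ k ∈ Finset.range (a+1), (if k ≤ b then q^(a-k) * g a b k else 0) := by
          rw [Finset.sum_range_succ' (fun k => if k ≤ b then q^(a-k) * g a b k else 0) a]
          simp
        have e3 : (∑ i ∈ Finset.range a, (if i ≤ b then (1 - q^(a-i)) * g a b i else 0))
            = ∑ k ∈ Finset.range (a+1), (if k ≤ b then (1 - q^(a-k)) * g a b k else 0) := by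
          rw [Finset.sum_range_succ]
          simp
        rw [add_right_comm, e2, e3, ← Finset.sum_add_distrib]
        apply Finset.sum_congr rfl
        intro k _
        split_ifs with h
        · ring
        · simp
      rw [IH] at h1
      have hb := one_sub_q_pow_ne_zero b
      have ha := qfac_ne_zero a
      have hqb := qfac_ne_zero b
      rw [qfac_succ]
      rw [eq_div_iff (by exact mul_ne_zero ha (mul_ne_zero hqb hb))]
      rw [eq_div_iff (mul_ne_zero ha hqb)] at h1
      linear_combination h1

lemma lhs_eval (a b : ℕ) : mulM A1 A2 (a, b)
    = ((-1:F)^a * t^(a^2)/qfac a) * ((-1:F)^b * t^(b^2)/qfac b) := by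
  rw [mulM]
  rw [Finset.sum_eq_single a]
  · rw [Finset.sum_eq_single 0]
    · simp [A1, A2]
    · intro k _ hk
      simp [A1, hk]
    · intro h
      exact absurd (Finset.mem_range.mpr (by omega)) h
  · intro k hk hka
    apply Finset.sum_eq_zero
    intro j _
    have : (a : ℕ) - k ≠ 0 := by
      have := Finset.mem_range.mp hk; omega
    simp [A2, this]
  · intro h
    exact absurd (Finset.mem_range.mpr (by omega)) h

lemma B_eval : mulM A2 A12 = fun c =>
    if c.1 ≤ c.2 then
      ((-1:F)^(c.2-c.1) * t^((c.2-c.1)^2)/qfac (c.2-c.1)) * (q^(c.1^2)/qfac c.1)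
        * q^((c.2-c.1)*c.1)
    else 0 := by
  funext c
  obtain ⟨c1, c2⟩ := c
  rw [mulM]
  simp only
  rw [Finset.sum_eq_single 0]
  · by_cases h : c1 ≤ c2
    · rw [Finset.sum_eq_single (c2 - c1)]
      · have h1 : c2 - (c2 - c1) = c1 := by omega
        rw [if_pos h]
        simp only [A2, A12, Nat.sub_zero, h1, if_pos rfl, if_pos rfl]
        simp
      · intro k hk hkc
        have : c1 ≠ c2 - k := by
          have := Finset.mem_range.mp hk; omega
        simp [A12, this]
      · intro hc
        exact absurd (Finset.mem_range.mpr (by omega)) hc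
    · rw [if_neg h]
      apply Finset.sum_eq_zero
      intro k hk
      have : c1 ≠ c2 - k := by
        have := Finset.mem_range.mp hk; omega
      simp [A12, this]
  · intro k _ hk
    apply Finset.sum_eq_zero
    intro j _
    simp [A2, hk]
  · intro h
    exact absurd (Finset.mem_range.mpr (by omega)) h

lemma rhs_eval (a b : ℕ) : mulM (mulM A2 A12) A1 (a, b)
    = ∑ k ∈ Finset.range (a+1),
        if k ≤ b then
          (((-1:F)^(b-k) * t^((b-k)^2)/qfac (b-k)) * (q^(k^2)/qfac k) * q^((b-k)*k))
            * ((-1:F)^(a-k) * t^((a-k)^2)/qfac (a-k)) * q^(b*(a-k))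
        else 0 := by
  rw [B_eval, mulM]
  simp only
  apply Finset.sum_congr rfl
  intro k _
  rw [Finset.sum_eq_single b]
  · have : b - b = 0 := by omega
    simp only [this, A1, if_pos rfl, ite_mul, zero_mul]
    simp
  · intro j hj hjb
    have : b - j ≠ 0 := by
      have := Finset.mem_range.mp hj; omega
    simp [A1, this]
  · intro h
    exact absurd (Finset.mem_range.mpr (by omega)) h

lemma term_conv (a b k : ℕ) (hk : k ≤ a) :
    (if k ≤ b then
        (((-1:F)^(b-k) * t^((b-k)^2)/qfac (b-k)) * (q^(k^2)/qfac k) * q^((b-k)*k))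
          * ((-1:F)^(a-k) * t^((a-k)^2)/qfac (a-k)) * q^(b*(a-k))
      else 0)
    = (-1:F)^(a+b) * t^(a^2+b^2) * (if k ≤ b then g a b k else 0) := by
  by_cases hb : k ≤ b
  · obtain ⟨x, rfl⟩ : ∃ x, a = k + x := ⟨a - k, by omega⟩
    obtain ⟨y, rfl⟩ : ∃ y, b = k + y := ⟨b - k, by omega⟩
    rw [if_pos hb, if_pos hb]
    simp only [g, Nat.add_sub_cancel_left]
    have hsign : ((-1:F))^(k + x + (k + y)) = (-1:F)^x * (-1:F)^y := by
      rw [show k + x + (k + y) = 2*k + (x+y) by omega, pow_add, pow_mul, pow_add]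
      norm_num
    rw [hsign]
    have h1 := qfac_ne_zero k
    have h2 := qfac_ne_zero x
    have h3 := qfac_ne_zero y
    simp only [q]
    field_simp
    ring
  · rw [if_neg hb, if_neg hb, mul_zero]

theorem stmt10 : mulM A1 A2 = mulM (mulM A2 A12) A1 := by
  funext c
  obtain ⟨a, b⟩ := c
  rw [lhs_eval, rhs_eval]
  have e1 : (∑ k ∈ Finset.range (a+1),
      if k ≤ b then
        (((-1:F)^(b-k) * t^((b-k)^2)/qfac (b-k)) * (q^(k^2)/qfac k) * q^((b-k)*k))
          * ((-1:F)^(a-k) * t^((a-k)^2)/qfac (a-k)) * q^(b*(a-k))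
      else 0)
      = ∑ k ∈ Finset.range (a+1),
          (-1:F)^(a+b) * t^(a^2+b^2) * (if k ≤ b then g a b k else 0) := by
    apply Finset.sum_congr rfl
    intro k hk
    exact term_conv a b k (by have := Finset.mem_range.mp hk; omega)
  rw [e1, ← Finset.mul_sum, key]
  have h1 := qfac_ne_zero a
  have h2 := qfac_ne_zero b
  field_simp
  ring


end

end Stmt10
end

section
/- In the Cohomological Hall algebra of the quiver A_2 (realized as the algebra generated by odd elements ξ_i, η_j for i,j ≥ 0 with relations ξ_iξ_j + ξ_jξ_i = 0, η_iη_j + η_jη_i = 0, and η_i ξ_j = ξ_{j+1}η_i - ξ_j η_{i+1}), the elements ν_i^1 := ξ_0 η_i for i ≥ 0 pairwise anticommute: ν_i^1 ν_j^1 + ν_j^1 ν_i^1 = 0, and similarly the elements ν_i^2 := ξ_i η_0 pairwise anticommute. -/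
/- STATEMENT 11: In the algebra generated by ξ_i, η_j (i,j ≥ 0) with relations
   ξ_iξ_j+ξ_jξ_i = 0, η_iη_j+η_jη_i = 0, η_iξ_j = ξ_{j+1}η_i - ξ_jη_{i+1},
   the elements ν_i^1 = ξ_0η_i pairwise anticommute, and so do ν_i^2 = ξ_iη_0. -/

namespace Stmt11

noncomputable section

abbrev FA := FreeAlgebra ℚ (ℕ ⊕ ℕ)

def xiF (i : ℕ) : FA := FreeAlgebra.ι ℚ (Sum.inl i)
def etaF (i : ℕ) : FA := FreeAlgebra.ι ℚ (Sum.inr i)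

/-- The defining relations of the Cohomological Hall algebra of the quiver `A₂`. -/
inductive Rel : FA → FA → Prop
  | xixi (i j : ℕ) : Rel (xiF i * xiF j) (-(xiF j * xiF i))
  | etaeta (i j : ℕ) : Rel (etaF i * etaF j) (-(etaF j * etaF i))
  | etaxi (i j : ℕ) : Rel (etaF i * xiF j) (xiF (j + 1) * etaF i - xiF j * etaF (i + 1))

abbrev A := RingQuot Rel

def ξ (i : ℕ) : A := RingQuot.mkRingHom Rel (xiF i)
def η (i : ℕ) : A := RingQuot.mkRingHom Rel (etaF i)


lemma xi_anti (i j : ℕ) : ξ i * ξ j = -(ξ j * ξ i) := by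
  unfold ξ
  rw [← map_mul, ← map_mul, ← map_neg]
  exact RingQuot.mkRingHom_rel (Rel.xixi i j)

lemma eta_anti (i j : ℕ) : η i * η j = -(η j * η i) := by
  unfold η
  rw [← map_mul, ← map_mul, ← map_neg]
  exact RingQuot.mkRingHom_rel (Rel.etaeta i j)

lemma eta_xi (i j : ℕ) : η i * ξ j = ξ (j + 1) * η i - ξ j * η (i + 1) := by
  unfold ξ η
  rw [← map_mul, ← map_mul, ← map_mul, ← map_sub]
  exact RingQuot.mkRingHom_rel (Rel.etaxi i j)

lemma xi_sq (i : ℕ) : ξ i * ξ i = 0 := by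
  have h := xi_anti i i
  have h2 : (2 : ℚ) • (ξ i * ξ i) = 0 := by
    rw [two_smul]
    nth_rewrite 1 [h]
    exact neg_add_cancel _
  have := congrArg (fun y => (2 : ℚ)⁻¹ • y) h2
  simpa [smul_smul, (by norm_num : ((2:ℚ)⁻¹ * 2) = 1)] using this

lemma eta_sq (i : ℕ) : η i * η i = 0 := by
  have h := eta_anti i i
  have h2 : (2 : ℚ) • (η i * η i) = 0 := by
    rw [two_smul]
    nth_rewrite 1 [h]
    exact neg_add_cancel _
  have := congrArg (fun y => (2 : ℚ)⁻¹ • y) h2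
  simpa [smul_smul, (by norm_num : ((2:ℚ)⁻¹ * 2) = 1)] using this

lemma nu1 (i j : ℕ) : (ξ 0 * η i) * (ξ 0 * η j) = ξ 0 * ξ 1 * (η i * η j) := by
  have : (ξ 0 * η i) * (ξ 0 * η j) = ξ 0 * (η i * ξ 0) * η j := by
    noncomm_ring
  rw [this, eta_xi i 0, mul_sub, sub_mul]
  have hz : ξ 0 * (ξ 0 * η (i + 1)) * η j = 0 := by
    rw [← mul_assoc, xi_sq, zero_mul, zero_mul]
  rw [hz, sub_zero]
  noncomm_ring

lemma nu2 (i j : ℕ) : (ξ i * η 0) * (ξ j * η 0) = -(ξ i * ξ j * (η 1 * η 0)) := by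
  have : (ξ i * η 0) * (ξ j * η 0) = ξ i * (η 0 * ξ j) * η 0 := by
    noncomm_ring
  rw [this, eta_xi 0 j, mul_sub, sub_mul]
  have hz : ξ i * (ξ (j + 1) * η 0) * η 0 = 0 := by
    rw [mul_assoc, mul_assoc, eta_sq, mul_zero, mul_zero]
  rw [hz, zero_sub]
  noncomm_ring

theorem stmt11 (i j : ℕ) :
    (ξ 0 * η i) * (ξ 0 * η j) + (ξ 0 * η j) * (ξ 0 * η i) = 0 ∧
    (ξ i * η 0) * (ξ j * η 0) + (ξ j * η 0) * (ξ i * η 0) = 0 := by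
  constructor
  · rw [nu1, nu1, ← mul_add, eta_anti j i, add_neg_cancel, mul_zero]
  · rw [nu2, nu2, ← neg_add, ← add_mul, xi_anti j i, add_neg_cancel, zero_mul, neg_zero]

end

end Stmt11
end

section
/- Let F(x; q^{1/2}) = ∏_{n≥1}∏_{i∈ℤ} (q^{i/2} x^n; q)_∞^{c(n,i)} with c(n,i) ∈ ℤ and, for each n, c(n,i) = 0 for |i| sufficiently large. Then G(x;q^{1/2}) := F(x;q^{1/2})/F(qx;q^{1/2}) lies in ℤ[q^{±1/2}][[x]], and its evaluation at q^{1/2} = 1 has the form G(x;1) = ∏_{n≥1}(1-x^n)^{n·c(n)} where c(n) = ∑_i c(n,i). -/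
/- STATEMENT 12: If F = ∏_{n≥1}∏_{i∈ℤ}(q^{i/2}x^n;q)_∞^{c(n,i)} is admissible (integer
   exponents, finitely supported in i for each n), then G := F(x)/F(qx) has coefficients in
   ℤ[q^{±1/2}], and its evaluation at q^{1/2}=1 equals ∏_{n≥1}(1-x^n)^{n·c(n)} with
   c(n) = ∑_i c(n,i).  We work over K = ℚ((s)), s = q^{1/2}, q = s²; infinite products over
   n are expressed via stabilization of x-coefficients of truncated products; membership in
   ℤ[q^{±1/2}] is expressed as s^{m}·p(s) for p ∈ ℤ[s], and the evaluation at s = 1 is p(1). -/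

namespace Stmt12

noncomputable section

abbrev K := LaurentSeries ℚ

def sp (m : ℤ) : K := HahnSeries.single m 1

def qq : K := sp 2

def qfac (j : ℕ) : K := ∏ l ∈ Finset.range j, (1 - qq ^ (l + 1))

/-- `(a·x^n ; q)_∞` via Euler's expansion. -/
def poch (n : ℕ) (a : K) : PowerSeries K :=
  PowerSeries.mk fun k =>
    if n ∣ k ∧ n ≠ 0 then
      (-1 : K) ^ (k / n) * qq ^ ((k / n) * (k / n - 1) / 2) * a ^ (k / n) / qfac (k / n)
    else 0

def zpw (f : PowerSeries K) (c : ℤ) : PowerSeries K :=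
  f ^ c.toNat * Ring.inverse f ^ (-c).toNat

def zpwZ (f : PowerSeries ℤ) (c : ℤ) : PowerSeries ℤ :=
  f ^ c.toNat * Ring.inverse f ^ (-c).toNat

/-- The admissible series `F = ∏_{n≥1}∏_i (q^{i/2}x^n;q)_∞^{c(n,i)}`, defined through the
stabilized coefficients of its truncations. -/
def Fof (S : ℕ → Finset ℤ) (c : ℕ → ℤ → ℤ) : PowerSeries K :=
  PowerSeries.mk fun k =>
    PowerSeries.coeff (R := K) k (∏ n ∈ Finset.Icc 1 k, ∏ i ∈ S n, zpw (poch n (sp i)) (c n i))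

/-! ### Basic facts about `sp`, `qq`, `qfac` -/

open PowerSeries LaurentPolynomial

lemma sp_mul (a b : ℤ) : sp a * sp b = sp (a + b) := by
  simp [sp, HahnSeries.single_mul_single]

lemma sp_zero : sp 0 = 1 := rfl

lemma sp_pow (a : ℤ) (n : ℕ) : sp a ^ n = sp (n * a) := by
  simp [sp, HahnSeries.single_pow]

lemma qq_pow (n : ℕ) : qq ^ n = sp (2 * n) := by
  rw [qq, sp_pow]; ring_nf

lemma sp_ne_one {a : ℤ} (ha : a ≠ 0) : sp a ≠ 1 := fun h => by
  have := congrArg (fun x : K => x.coeff 0) h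
  simp [sp, HahnSeries.coeff_single] at this
  exact ha this.symm

lemma qfac_ne_zero (j : ℕ) : qfac j ≠ 0 := by
  refine Finset.prod_ne_zero_iff.2 fun l _ => ?_
  rw [qq_pow, sub_ne_zero]
  exact fun h => (sp_ne_one (by omega) h.symm).elim

lemma qfac_succ (j : ℕ) : qfac (j + 1) = qfac j * (1 - qq ^ (j + 1)) :=
  Finset.prod_range_succ _ _

/-! ### Integer powers of units of power-series rings -/

variable {R S : Type*} [CommRing R] [CommRing S]

def zp (f : PowerSeries R) (c : ℤ) : PowerSeries R :=
  f ^ c.toNat * Ring.inverse f ^ (-c).toNat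

lemma zpw_eq_zp (f : PowerSeries K) (c : ℤ) : zpw f c = zp f c := rfl

lemma zpwZ_eq_zp (f : PowerSeries ℤ) (c : ℤ) : zpwZ f c = zp f c := rfl

lemma zp_coe_unit (u : (PowerSeries R)ˣ) (c : ℤ) :
    zp (u : PowerSeries R) c = ((u ^ c : (PowerSeries R)ˣ) : PowerSeries R) := by
  unfold zp
  rw [Ring.inverse_unit]
  rcases le_or_gt 0 c with h | h
  · rw [show (-c).toNat = 0 by omega, pow_zero, mul_one]
    rw [show c = (c.toNat : ℤ) by omega, zpow_natCast, Units.val_pow_eq_pow_val, Int.toNat_natCast]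
  · rw [show c.toNat = 0 by omega, pow_zero, one_mul]
    rw [show c = -((-c).toNat : ℤ) by omega, zpow_neg, zpow_natCast, ← inv_pow,
      Units.val_pow_eq_pow_val]
    congr 1
    omega

lemma zp_of_isUnit {f : PowerSeries R} (hf : IsUnit f) (c : ℤ) :
    zp f c = ((hf.unit ^ c : (PowerSeries R)ˣ) : PowerSeries R) := by
  conv_lhs => rw [← hf.unit_spec]
  exact zp_coe_unit _ _

lemma zp_mul {f g : PowerSeries R} (hf : IsUnit f) (hg : IsUnit g) (c : ℤ) :
    zp (f * g) c = zp f c * zp g c := by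
  obtain ⟨u, rfl⟩ := hf; obtain ⟨v, rfl⟩ := hg
  rw [← Units.val_mul, zp_coe_unit, zp_coe_unit, zp_coe_unit, ← Units.val_mul, ← mul_zpow]

lemma zp_add {f : PowerSeries R} (hf : IsUnit f) (a b : ℤ) :
    zp f (a + b) = zp f a * zp f b := by
  obtain ⟨u, rfl⟩ := hf
  rw [zp_coe_unit, zp_coe_unit, zp_coe_unit, ← Units.val_mul, zpow_add]

lemma zp_pow_base {f : PowerSeries R} (hf : IsUnit f) (n : ℕ) (c : ℤ) :
    zp (f ^ n) c = zp f ((n : ℤ) * c) := by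
  obtain ⟨u, rfl⟩ := hf
  rw [← Units.val_pow_eq_pow_val, zp_coe_unit, zp_coe_unit, ← zpow_natCast, ← zpow_mul]

lemma zp_ringHom (σ : PowerSeries R →+* PowerSeries S) {f : PowerSeries R}
    (hf : IsUnit f) (c : ℤ) : σ (zp f c) = zp (σ f) c := by
  obtain ⟨u, rfl⟩ := hf
  have h1 : σ (u : PowerSeries R)
      = ((Units.map σ.toMonoidHom u : (PowerSeries S)ˣ) : PowerSeries S) := rfl
  rw [zp_coe_unit, h1, zp_coe_unit, ← map_zpow]
  rfl

lemma zp_sum {f : PowerSeries R} (hf : IsUnit f) {ι : Type*} (s : Finset ι) (c : ι → ℤ) :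
    zp f (∑ i ∈ s, c i) = ∏ i ∈ s, zp f (c i) := by
  classical
  induction s using Finset.induction with
  | empty => simp [zp_of_isUnit hf]
  | insert _ _ h ih =>
      rw [Finset.sum_insert h, Finset.prod_insert h, zp_add hf, ih]

/-! ### Congruence `≡ 1 (mod X^n)` -/

def low (n : ℕ) (f : PowerSeries R) : Prop := ∃ r, f = 1 + X ^ n * r

lemma low_one (n : ℕ) : low n (1 : PowerSeries R) := ⟨0, by ring⟩

lemma low_mul {n : ℕ} {f g : PowerSeries R} (hf : low n f) (hg : low n g) :
    low n (f * g) := by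
  obtain ⟨r, rfl⟩ := hf; obtain ⟨s, rfl⟩ := hg
  exact ⟨r + s + X ^ n * r * s, by ring⟩

lemma low_mono {n m : ℕ} (h : m ≤ n) {f : PowerSeries R} (hf : low n f) : low m f := by
  obtain ⟨r, rfl⟩ := hf
  exact ⟨X ^ (n - m) * r, by rw [← mul_assoc, ← pow_add, Nat.add_sub_cancel' h]⟩

lemma low_prod {n : ℕ} {ι : Type*} {s : Finset ι} {f : ι → PowerSeries R}
    (hf : ∀ i ∈ s, low n (f i)) : low n (∏ i ∈ s, f i) := by
  classical
  induction s using Finset.induction with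
  | empty => simpa using low_one n
  | insert _ _ h ih =>
      rw [Finset.prod_insert h]
      exact low_mul (hf _ (Finset.mem_insert_self _ _))
        (ih fun i hi => hf i (Finset.mem_insert_of_mem hi))

lemma low_pow {n : ℕ} {f : PowerSeries R} (hf : low n f) (m : ℕ) : low n (f ^ m) := by
  induction m with
  | zero => simpa using low_one n
  | succ m ih => rw [pow_succ]; exact low_mul ih hf

lemma low_constantCoeff {n : ℕ} (hn : 0 < n) {f : PowerSeries R} (hf : low n f) :
    constantCoeff (R := R) f = 1 := by
  obtain ⟨r, rfl⟩ := hf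
  simp [constantCoeff_X, zero_pow hn.ne']

lemma low_isUnit {n : ℕ} (hn : 0 < n) {f : PowerSeries R} (hf : low n f) : IsUnit f := by
  rw [PowerSeries.isUnit_iff_constantCoeff, low_constantCoeff hn hf]
  exact isUnit_one

lemma low_inverse {n : ℕ} (hn : 0 < n) {f : PowerSeries R} (hf : low n f) :
    low n (Ring.inverse f) := by
  have hu := low_isUnit hn hf
  obtain ⟨r, hr⟩ := hf
  have h1 : f * Ring.inverse f = 1 := Ring.mul_inverse_cancel f hu
  refine ⟨-(r * Ring.inverse f), ?_⟩
  linear_combination h1 - Ring.inverse f * hr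

lemma low_zp {n : ℕ} (hn : 0 < n) {f : PowerSeries R} (hf : low n f) (c : ℤ) :
    low n (zp f c) :=
  low_mul (low_pow hf _) (low_pow (low_inverse hn hf) _)

lemma coeff_mul_low {k : ℕ} {f g : PowerSeries R} (hg : low (k + 1) g) :
    PowerSeries.coeff (R := R) k (f * g) = PowerSeries.coeff (R := R) k f := by
  obtain ⟨r, rfl⟩ := hg
  have : f * (1 + X ^ (k + 1) * r) = f + X ^ (k + 1) * (f * r) := by ring
  rw [this, map_add, coeff_X_pow_mul', if_neg (by omega), add_zero]

lemma coeff_prod_stab (h : ℕ → PowerSeries R) (hl : ∀ n, 0 < n → low n (h n))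
    (k N : ℕ) (hN : k ≤ N) :
    PowerSeries.coeff (R := R) k (∏ n ∈ Finset.Icc 1 N, h n) =
      PowerSeries.coeff (R := R) k (∏ n ∈ Finset.Icc 1 k, h n) := by
  have hsplit : Finset.Icc 1 N = Finset.Icc 1 k ∪ Finset.Icc (k + 1) N := by
    ext x; simp only [Finset.mem_union, Finset.mem_Icc]; omega
  have hdis : Disjoint (Finset.Icc 1 k) (Finset.Icc (k + 1) N) := by
    rw [Finset.disjoint_left]; intro x hx hx'
    simp only [Finset.mem_Icc] at hx hx'; omega
  rw [hsplit, Finset.prod_union hdis]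
  exact coeff_mul_low (low_prod fun n hn => by
    have := Finset.mem_Icc.1 hn
    exact low_mono this.1 (hl n (by omega)))

/-! ### Properties of `poch` -/

lemma tri (m : ℕ) : m * (m - 1) / 2 + m = (m + 1) * m / 2 := by
  have h1 := Finset.sum_range_id m
  have h2 := Finset.sum_range_id (m + 1)
  rw [Nat.add_sub_cancel] at h2
  rw [← h1, ← h2, Finset.sum_range_succ]

lemma coeff_poch_zero (n : ℕ) (hn : n ≠ 0) (a : K) :
    PowerSeries.coeff (R := K) 0 (poch n a) = 1 := by
  simp [poch, qfac, hn]

lemma coeff_poch_of_not_dvd {n k : ℕ} (h : ¬ n ∣ k) (a : K) :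
    PowerSeries.coeff (R := K) k (poch n a) = 0 := by
  simp [poch, h]

lemma coeff_poch_dvd (n : ℕ) (hn : n ≠ 0) (j : ℕ) (a : K) :
    PowerSeries.coeff (R := K) (n * j) (poch n a) =
      (-1 : K) ^ j * qq ^ (j * (j - 1) / 2) * a ^ j / qfac j := by
  have : n * j / n = j := Nat.mul_div_cancel_left j (Nat.pos_of_ne_zero hn)
  simp [poch, hn, this, Dvd.intro j rfl]

lemma one_sub_qq_pow_ne_zero (m : ℕ) : (1 : K) - qq ^ (m + 1) ≠ 0 := fun h =>
  qfac_ne_zero (m + 1) (by rw [qfac_succ, h, mul_zero])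

lemma poch_step (n : ℕ) (hn : 0 < n) (a : K) :
    poch n a = (1 - PowerSeries.C (R := K) a * X ^ n) * poch n (a * qq) := by
  refine PowerSeries.ext fun k => ?_
  rw [sub_mul, one_mul, map_sub, mul_assoc, coeff_C_mul, coeff_X_pow_mul']
  by_cases hd : n ∣ k
  · obtain ⟨j, rfl⟩ := hd
    have hjn : n * j / n = j := Nat.mul_div_cancel_left j hn
    rcases Nat.eq_zero_or_pos j with rfl | hj
    · rw [if_neg (by omega)]
      simp only [mul_zero, sub_zero]
      rw [coeff_poch_zero n hn.ne', coeff_poch_zero n hn.ne']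
    · obtain ⟨m, rfl⟩ : ∃ m, j = m + 1 := ⟨j - 1, by omega⟩
      rw [if_pos (by nlinarith)]
      have hsub : n * (m + 1) - n = n * m := by rw [Nat.mul_succ]; omega
      rw [hsub, coeff_poch_dvd n hn.ne' (m + 1) a, coeff_poch_dvd n hn.ne' (m + 1) (a * qq),
        coeff_poch_dvd n hn.ne' m (a * qq), Nat.add_sub_cancel]
      have e1 : (m + 1) * m / 2 = m * (m - 1) / 2 + m := (tri m).symm
      rw [e1, pow_add, qfac_succ, mul_pow a qq, mul_pow a qq]
      have h1 := qfac_ne_zero m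
      have h2 := one_sub_qq_pow_ne_zero m
      field_simp
      ring
  · rw [coeff_poch_of_not_dvd hd, coeff_poch_of_not_dvd hd]
    rcases le_or_gt n k with h | h
    · have hnd : ¬ n ∣ (k - n) := fun ⟨t, ht⟩ => hd ⟨t + 1, by rw [Nat.mul_succ]; omega⟩
      rw [if_pos h, coeff_poch_of_not_dvd hnd]
      ring
    · rw [if_neg (by omega)]; ring

lemma poch_iter (n : ℕ) (hn : 0 < n) (a : K) (t : ℕ) :
    poch n a =
      (∏ l ∈ Finset.range t, (1 - PowerSeries.C (R := K) (a * qq ^ l) * X ^ n)) *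
        poch n (a * qq ^ t) := by
  induction t with
  | zero => simp
  | succ t ih =>
      rw [ih, Finset.prod_range_succ, poch_step n hn (a * qq ^ t)]
      rw [pow_succ, ← mul_assoc a]
      ring

lemma rescale_poch (n : ℕ) (hn : 0 < n) (a : K) :
    PowerSeries.rescale qq (poch n a) = poch n (a * qq ^ n) := by
  refine PowerSeries.ext fun k => ?_
  rw [coeff_rescale]
  by_cases hd : n ∣ k
  · obtain ⟨j, rfl⟩ := hd
    rw [coeff_poch_dvd n hn.ne' j a, coeff_poch_dvd n hn.ne' j (a * qq ^ n),
      mul_pow, ← pow_mul]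
    ring_nf
  · rw [coeff_poch_of_not_dvd hd, coeff_poch_of_not_dvd hd, mul_zero]

lemma low_of_coeff {n : ℕ} (hn : 0 < n) {f : PowerSeries K}
    (h0 : PowerSeries.coeff (R := K) 0 f = 1) (h : ∀ j, 0 < j → j < n → PowerSeries.coeff (R := K) j f = 0) :
    low n f := by
  refine ⟨PowerSeries.mk fun j => PowerSeries.coeff (R := K) (j + n) f, ?_⟩
  refine PowerSeries.ext fun k => ?_
  rw [map_add, coeff_X_pow_mul']
  rcases Nat.eq_zero_or_pos k with rfl | hk
  · rw [if_neg (by omega)]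
    simpa using h0
  · rw [coeff_one, if_neg hk.ne']
    rcases le_or_gt n k with hnk | hnk
    · rw [if_pos hnk, coeff_mk, Nat.sub_add_cancel hnk, zero_add]
    · rw [if_neg (by omega), h k hk hnk, zero_add]

lemma low_poch (n : ℕ) (hn : 0 < n) (a : K) : low n (poch n a) := by
  refine low_of_coeff hn (coeff_poch_zero n hn.ne' a) fun j hj hjn => ?_
  exact coeff_poch_of_not_dvd (fun hd => by have := Nat.le_of_dvd hj hd; omega) a

lemma isUnit_poch (n : ℕ) (hn : 0 < n) (a : K) : IsUnit (poch n a) :=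
  low_isUnit hn (low_poch n hn a)

/-! ### Laurent polynomials and the two evaluations -/

abbrev A := LaurentPolynomial ℤ

def spHom : Multiplicative ℤ →* K where
  toFun z := sp z.toAdd
  map_one' := sp_zero
  map_mul' _ _ := (sp_mul _ _).symm

def phi : A →+* K :=
  (AddMonoidAlgebra.lift ℤ K ℤ spHom).toRingHom

def eps : A →+* ℤ :=
  (AddMonoidAlgebra.lift ℤ ℤ ℤ (1 : Multiplicative ℤ →* ℤ)).toRingHom

lemma phi_T (z : ℤ) : phi (T z) = sp z := by
  show (AddMonoidAlgebra.lift ℤ K ℤ spHom) (AddMonoidAlgebra.single z 1) = sp z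
  rw [AddMonoidAlgebra.lift_single, Algebra.smul_def, map_one, one_mul]
  rfl

lemma eps_T (z : ℤ) : eps (T z) = 1 := by
  show (AddMonoidAlgebra.lift ℤ ℤ ℤ 1) (AddMonoidAlgebra.single z 1) = 1
  rw [AddMonoidAlgebra.lift_single]
  simp

lemma phi_toLaurent (p : Polynomial ℤ) :
    phi (p.toLaurent) = Polynomial.aeval (sp 1) p := by
  have : phi.comp (Polynomial.toLaurent (R := ℤ)) =
      (Polynomial.aeval (sp 1) : Polynomial ℤ →ₐ[ℤ] K).toRingHom := by
    apply Polynomial.ringHom_ext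
    · intro a
      simp only [RingHom.coe_comp, Function.comp_apply, Polynomial.toLaurent_C]
      rw [show (LaurentPolynomial.C (a : ℤ) : A) = (a : A) by simp, map_intCast]
      simp
    · simp only [RingHom.coe_comp, Function.comp_apply, Polynomial.toLaurent_X]
      rw [phi_T]
      simp
  exact RingHom.congr_fun this p

lemma eps_toLaurent (p : Polynomial ℤ) : eps (p.toLaurent) = p.eval 1 := by
  have : eps.comp (Polynomial.toLaurent (R := ℤ)) = Polynomial.evalRingHom 1 := by
    apply Polynomial.ringHom_ext
    · intro a
      simp only [RingHom.coe_comp, Function.comp_apply, Polynomial.toLaurent_C]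
      rw [show (LaurentPolynomial.C (a : ℤ) : A) = (a : A) by simp, map_intCast]
      simp
    · simp only [RingHom.coe_comp, Function.comp_apply, Polynomial.toLaurent_X]
      rw [eps_T]
      simp
  exact RingHom.congr_fun this p

/-! ### The truncated ratio products -/

def ratioK (n : ℕ) (i : ℤ) : PowerSeries K :=
  ∏ l ∈ Finset.range n, (1 - PowerSeries.C (R := K) (sp i * qq ^ l) * X ^ n)

def ratioA (n : ℕ) (i : ℤ) : PowerSeries A :=
  ∏ l ∈ Finset.range n, (1 - PowerSeries.C (R := A) (T (i + 2 * l)) * X ^ n)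

lemma low_one_sub_C_mul_X_pow (n : ℕ) (u : R) :
    low n (1 - PowerSeries.C (R := R) u * X ^ n) := ⟨-PowerSeries.C (R := R) u, by ring⟩

lemma low_ratioK (n : ℕ) (i : ℤ) : low n (ratioK n i) :=
  low_prod fun l _ => low_one_sub_C_mul_X_pow n _

lemma low_ratioA (n : ℕ) (i : ℤ) : low n (ratioA n i) :=
  low_prod fun l _ => low_one_sub_C_mul_X_pow n _

lemma isUnit_ratioK {n : ℕ} (hn : 0 < n) (i : ℤ) : IsUnit (ratioK n i) :=
  low_isUnit hn (low_ratioK n i)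

lemma isUnit_ratioA {n : ℕ} (hn : 0 < n) (i : ℤ) : IsUnit (ratioA n i) :=
  low_isUnit hn (low_ratioA n i)

lemma map_phi_ratioA (n : ℕ) (i : ℤ) :
    PowerSeries.map phi (ratioA n i) = ratioK n i := by
  rw [ratioA, ratioK, map_prod]
  refine Finset.prod_congr rfl fun l _ => ?_
  rw [map_sub, map_one, map_mul, map_pow, PowerSeries.map_X, PowerSeries.map_C, phi_T]
  have : sp (i + 2 * l) = sp i * qq ^ l := by rw [qq_pow, sp_mul]
  rw [this]

lemma map_eps_ratioA (n : ℕ) (i : ℤ) :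
    PowerSeries.map eps (ratioA n i) =
      ((1 : PowerSeries ℤ) - X ^ n) ^ n := by
  rw [ratioA, map_prod]
  rw [Finset.prod_congr rfl fun l _ => ?_, Finset.prod_const, Finset.card_range]
  rw [map_sub, map_one, map_mul, map_pow, PowerSeries.map_X, PowerSeries.map_C, eps_T]
  rw [map_one, one_mul]

/-! ### The main proof -/

section Main

variable (S : ℕ → Finset ℤ) (c : ℕ → ℤ → ℤ)

def FN (N : ℕ) : PowerSeries K :=
  ∏ n ∈ Finset.Icc 1 N, ∏ i ∈ S n, zp (poch n (sp i)) (c n i)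

def GPK (N : ℕ) : PowerSeries K :=
  ∏ n ∈ Finset.Icc 1 N, ∏ i ∈ S n, zp (ratioK n i) (c n i)

def GPA (N : ℕ) : PowerSeries A :=
  ∏ n ∈ Finset.Icc 1 N, ∏ i ∈ S n, zp (ratioA n i) (c n i)

lemma coeff_Fof (k : ℕ) :
    PowerSeries.coeff (R := K) k (Fof S c) = PowerSeries.coeff (R := K) k (FN S c k) := by
  rw [Fof, coeff_mk]; rfl

lemma low_FN_factor (n : ℕ) (hn : 0 < n) :
    low n (∏ i ∈ S n, zp (poch n (sp i)) (c n i)) :=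
  low_prod fun i _ => low_zp hn (low_poch n hn _) _

lemma low_GPK_factor (n : ℕ) (hn : 0 < n) :
    low n (∏ i ∈ S n, zp (ratioK n i) (c n i)) :=
  low_prod fun i _ => low_zp hn (low_ratioK n i) _

lemma stab_FN {k N : ℕ} (hN : k ≤ N) :
    PowerSeries.coeff (R := K) k (FN S c N) = PowerSeries.coeff (R := K) k (FN S c k) :=
  coeff_prod_stab _ (fun n hn => low_FN_factor S c n hn) k N hN

lemma stab_GPK {k N : ℕ} (hN : k ≤ N) :
    PowerSeries.coeff (R := K) k (GPK S c N) = PowerSeries.coeff (R := K) k (GPK S c k) :=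
  coeff_prod_stab _ (fun n hn => low_GPK_factor S c n hn) k N hN

lemma key_factor {n : ℕ} (hn : 0 < n) (i : ℤ) (e : ℤ) :
    PowerSeries.rescale qq (zp (poch n (sp i)) e) * zp (ratioK n i) e =
      zp (poch n (sp i)) e := by
  have hb : poch n (sp i * qq ^ n) * ratioK n i = poch n (sp i) := by
    rw [mul_comm, ratioK]
    exact (poch_iter n hn (sp i) n).symm
  rw [zp_ringHom _ (isUnit_poch n hn _), rescale_poch n hn,
    ← zp_mul (isUnit_poch n hn _) (isUnit_ratioK hn i), hb]

lemma rescale_FN_mul (N : ℕ) :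
    PowerSeries.rescale qq (FN S c N) * GPK S c N = FN S c N := by
  rw [FN, GPK, map_prod, ← Finset.prod_mul_distrib]
  refine Finset.prod_congr rfl fun n hn => ?_
  have hn1 : 0 < n := by have := Finset.mem_Icc.1 hn; omega
  rw [map_prod, ← Finset.prod_mul_distrib]
  exact Finset.prod_congr rfl fun i _ => key_factor hn1 i (c n i)

def GtK : PowerSeries K := PowerSeries.mk fun k => PowerSeries.coeff (R := K) k (GPK S c k)

lemma main_eq : PowerSeries.rescale qq (Fof S c) * GtK S c = Fof S c := by
  refine PowerSeries.ext fun k => ?_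
  rw [PowerSeries.coeff_mul]
  have : ∀ p ∈ Finset.HasAntidiagonal.antidiagonal k,
      PowerSeries.coeff (R := K) p.1 (PowerSeries.rescale qq (Fof S c)) *
        PowerSeries.coeff (R := K) p.2 (GtK S c) =
      PowerSeries.coeff (R := K) p.1 (PowerSeries.rescale qq (FN S c k)) *
        PowerSeries.coeff (R := K) p.2 (GPK S c k) := by
    rintro ⟨p1, p2⟩ hp
    rw [Finset.HasAntidiagonal.mem_antidiagonal] at hp
    simp only []
    rw [coeff_rescale, coeff_rescale, coeff_Fof, stab_FN S c (show p1 ≤ k by omega)]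
    rw [GtK, coeff_mk, stab_GPK S c (show p2 ≤ k by omega)]
  rw [Finset.sum_congr rfl this, ← PowerSeries.coeff_mul, rescale_FN_mul, ← coeff_Fof]

lemma constCoeff_Fof : PowerSeries.constantCoeff (R := K) (Fof S c) = 1 := by
  have : PowerSeries.constantCoeff (R := K) (Fof S c) = PowerSeries.coeff (R := K) 0 (Fof S c) := by
    simp [PowerSeries.coeff_zero_eq_constantCoeff]
  rw [this, coeff_Fof]
  simp [FN]

lemma G_eq_GtK : Fof S c * (PowerSeries.rescale qq (Fof S c))⁻¹ = GtK S c := by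
  have hc0 : PowerSeries.constantCoeff (R := K) (PowerSeries.rescale qq (Fof S c)) ≠ 0 := by
    rw [← PowerSeries.coeff_zero_eq_constantCoeff, coeff_rescale, pow_zero, one_mul,
      PowerSeries.coeff_zero_eq_constantCoeff, constCoeff_Fof]
    exact one_ne_zero
  have hinv := PowerSeries.mul_inv_cancel (PowerSeries.rescale qq (Fof S c)) hc0
  calc Fof S c * (PowerSeries.rescale qq (Fof S c))⁻¹
      = (PowerSeries.rescale qq (Fof S c) * GtK S c) *
          (PowerSeries.rescale qq (Fof S c))⁻¹ := by rw [main_eq]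
    _ = GtK S c * (PowerSeries.rescale qq (Fof S c) *
          (PowerSeries.rescale qq (Fof S c))⁻¹) := by ring
    _ = GtK S c := by rw [hinv, mul_one]

lemma map_phi_GPA (N : ℕ) : PowerSeries.map phi (GPA S c N) = GPK S c N := by
  rw [GPA, GPK, map_prod]
  refine Finset.prod_congr rfl fun n hn => ?_
  have hn1 : 0 < n := by have := Finset.mem_Icc.1 hn; omega
  rw [map_prod]
  refine Finset.prod_congr rfl fun i _ => ?_
  rw [zp_ringHom _ (isUnit_ratioA hn1 i), map_phi_ratioA]

lemma map_eps_GPA (N : ℕ) :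
    PowerSeries.map eps (GPA S c N) =
      ∏ n ∈ Finset.Icc 1 N, zpwZ (1 - (PowerSeries.X : PowerSeries ℤ) ^ n)
        ((n : ℤ) * ∑ i ∈ S n, c n i) := by
  rw [GPA, map_prod]
  refine Finset.prod_congr rfl fun n hn => ?_
  have hn1 : 0 < n := by have := Finset.mem_Icc.1 hn; omega
  have hu : IsUnit ((1 : PowerSeries ℤ) - X ^ n) :=
    low_isUnit hn1 ⟨-1, by ring⟩
  rw [map_prod]
  rw [Finset.prod_congr rfl fun i (_ : i ∈ S n) => ?_]
  · rw [zpwZ_eq_zp, Finset.mul_sum, zp_sum hu]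
  · rw [zp_ringHom _ (isUnit_ratioA hn1 i), map_eps_ratioA, zp_pow_base hu]

theorem stmt12 (S : ℕ → Finset ℤ) (c : ℕ → ℤ → ℤ)
    (hc : ∀ n i, i ∉ S n → c n i = 0) :
    ∃ (g : ℕ → Polynomial ℤ) (m : ℕ → ℤ),
      -- G = F(x)/F(qx) has coefficients in ℤ[q^{±1/2}] :
      (∀ k, PowerSeries.coeff (R := K) k (Fof S c * (PowerSeries.rescale qq (Fof S c))⁻¹) =
          HahnSeries.single (m k) (1 : ℚ) * Polynomial.aeval (sp 1) (g k)) ∧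
      -- and the evaluation at q^{1/2} = 1 is ∏_{n≥1}(1-x^n)^{n·c(n)} :
      (∀ k, Polynomial.eval (1 : ℤ) (g k) =
          PowerSeries.coeff (R := ℤ) k
            (∏ n ∈ Finset.Icc 1 k,
              zpwZ (1 - (PowerSeries.X : PowerSeries ℤ) ^ n) ((n : ℤ) * ∑ i ∈ S n, c n i))) := by
  classical
  -- the Laurent-polynomial coefficients of G
  set L : ℕ → A := fun k => PowerSeries.coeff (R := A) k (GPA S c k) with hL
  have hwrite : ∀ k, ∃ (t : ℕ) (p : Polynomial ℤ), p.toLaurent = L k * T (t : ℤ) :=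
    fun k => LaurentPolynomial.exists_T_pow (L k)
  choose t g hg using hwrite
  refine ⟨g, fun k => -(t k : ℤ), ?_, ?_⟩
  all_goals intro k
  · -- coefficients in ℤ[q^{±1/2}]
    rw [G_eq_GtK]
    have hLk : L k = Polynomial.toLaurent (g k) * T (-(t k : ℤ)) := by
      rw [hg k, mul_T_assoc]
      simp
    have h1 : PowerSeries.coeff (R := K) k (GtK S c) = phi (L k) := by
      rw [GtK, coeff_mk, ← map_phi_GPA, PowerSeries.coeff_map, hL]
    rw [h1, hLk, map_mul, phi_T, phi_toLaurent]
    show Polynomial.aeval (sp 1) (g k) * sp (-(t k : ℤ)) = sp (-(t k : ℤ)) * _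
    ring
  · -- evaluation at s = 1
    have hLk : L k = Polynomial.toLaurent (g k) * T (-(t k : ℤ)) := by
      rw [hg k, mul_T_assoc]
      simp
    have h2 : eps (L k) = Polynomial.eval 1 (g k) := by
      rw [hLk, map_mul, eps_T, eps_toLaurent, mul_one]
    rw [← h2, hL]
    show eps (PowerSeries.coeff (R := A) k (GPA S c k)) = _
    rw [← PowerSeries.coeff_map, map_eps_GPA]

end Main

end

end Stmt12
end
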